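/- arXiv:1412.4655 — 8 statements merged into one kernel-verified Lean document; each statement's English description precedes it below -/
import Mathlib

section
/- For every natural number p and every real number t that is not a nonpositive integer, Γ(p+1+t)/p! = t · Σ_{i=0}^{p} Γ(i+t)/i!. -/
theorem gamma_sum_identity (p : ℕ) (t : ℝ) (ht : ∀ n : ℕ, t ≠ -(n : ℝ)) :
    Real.Gamma ((p : ℝ) + 1 + t) / (p.factorial : ℝ)
      = t * ∑ i ∈ Finset.range (p + 1), Real.Gamma ((i : ℝ) + t) / (i.factorial : ℝ) := by
  induction p with
  | zero =>
    simp only [Nat.cast_zero, Nat.factorial_zero, Nat.cast_one, Finset.range_one,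
      Finset.sum_singleton, zero_add, div_one]
    rw [show (1:ℝ)+t = t+1 by ring, Real.Gamma_add_one (by simpa using ht 0)]
  | succ n ih =>
    have hne : (n : ℝ) + 1 + t ≠ 0 := by
      intro h
      exact ht (n + 1) (by push_cast; linarith)
    rw [Finset.sum_range_succ, mul_add, ← ih, Nat.factorial_succ]
    have h1 : ((n : ℝ) + 1) + 1 + t = ((n : ℝ) + 1 + t) + 1 := by ring
    push_cast
    rw [h1, Real.Gamma_add_one hne]
    have hfac : (n.factorial : ℝ) ≠ 0 := by positivity
    field_simp
end

section
/- Gautschi's inequality: for real numbers r and x with 0 < r < 1 and x > 0, one has x^{1-r} ≤ Γ(x+1)/Γ(x+r) ≤ (x+1)^{1-r}. -/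
open Real

lemma gamma_log_convex_aux {a b t : ℝ} (ha : 0 < a) (hb : 0 < b) (ht0 : 0 ≤ t) (ht1 : t ≤ 1) :
    Gamma (t * a + (1 - t) * b) ≤ Gamma a ^ t * Gamma b ^ (1 - t) := by
  have h := Real.convexOn_log_Gamma.2 (Set.mem_Ioi.mpr ha) (Set.mem_Ioi.mpr hb) ht0
    (by linarith : (0:ℝ) ≤ 1 - t) (by ring)
  simp only [Function.comp_apply, smul_eq_mul] at h
  have hpos : 0 < t * a + (1 - t) * b := by
    rcases lt_or_eq_of_le ht1 with h' | h'
    · nlinarith [mul_nonneg ht0 ha.le, mul_pos (by linarith : (0:ℝ) < 1 - t) hb]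
    · subst h'; nlinarith
  calc Gamma (t * a + (1 - t) * b) = exp (log (Gamma (t * a + (1 - t) * b))) :=
        (exp_log (Gamma_pos_of_pos hpos)).symm
    _ ≤ exp (t * log (Gamma a) + (1 - t) * log (Gamma b)) := exp_le_exp.mpr h
    _ = Gamma a ^ t * Gamma b ^ (1 - t) := by
        rw [rpow_def_of_pos (Gamma_pos_of_pos ha), rpow_def_of_pos (Gamma_pos_of_pos hb),
          ← exp_add]
        ring_nf

theorem gautschi_inequality (r x : ℝ) (hr0 : 0 < r) (hr1 : r < 1) (hx : 0 < x) :
    x ^ (1 - r) ≤ Real.Gamma (x + 1) / Real.Gamma (x + r) ∧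
    Real.Gamma (x + 1) / Real.Gamma (x + r) ≤ (x + 1) ^ (1 - r) := by
  have hxr : 0 < x + r := by linarith
  have hΓxr : 0 < Gamma (x + r) := Gamma_pos_of_pos hxr
  have hΓx : 0 < Gamma x := Gamma_pos_of_pos hx
  have hΓx1 : 0 < Gamma (x + 1) := Gamma_pos_of_pos (by linarith)
  have hadd : Gamma (x + 1) = x * Gamma x := Gamma_add_one hx.ne'
  constructor
  · -- lower bound
    have h1 : Gamma (x + r) ≤ Gamma x ^ (1 - r) * Gamma (x + 1) ^ (1 - (1 - r)) := by
      have := gamma_log_convex_aux hx (show (0:ℝ) < x + 1 by linarith)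
        (show (0:ℝ) ≤ 1 - r by linarith) (by linarith)
      convert this using 2
      ring
    rw [le_div_iff₀ hΓxr]
    calc x ^ (1 - r) * Gamma (x + r)
        ≤ x ^ (1 - r) * (Gamma x ^ (1 - r) * Gamma (x + 1) ^ (1 - (1 - r))) := by
          exact mul_le_mul_of_nonneg_left h1 (rpow_nonneg hx.le _)
      _ = (x * Gamma x) ^ (1 - r) * Gamma (x + 1) ^ (1 - (1 - r)) := by
          rw [mul_rpow hx.le hΓx.le]; ring
      _ = Gamma (x + 1) ^ (1 - r) * Gamma (x + 1) ^ (1 - (1 - r)) := by rw [hadd]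
      _ = Gamma (x + 1) := by
          rw [← rpow_add hΓx1]; norm_num
  · -- upper bound
    have hadd2 : Gamma (x + r + 1) = (x + r) * Gamma (x + r) := Gamma_add_one hxr.ne'
    have h2 : Gamma (x + 1) ≤ Gamma (x + r) ^ r * Gamma (x + r + 1) ^ (1 - r) := by
      have := gamma_log_convex_aux hxr (show (0:ℝ) < x + r + 1 by linarith) hr0.le hr1.le
      convert this using 2
      ring
    have key : Gamma (x + 1) / Gamma (x + r) ≤ (x + r) ^ (1 - r) := by
      rw [div_le_iff₀ hΓxr]
      calc Gamma (x + 1) ≤ Gamma (x + r) ^ r * Gamma (x + r + 1) ^ (1 - r) := h2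
        _ = Gamma (x + r) ^ r * ((x + r) ^ (1 - r) * Gamma (x + r) ^ (1 - r)) := by
            rw [hadd2, mul_rpow hxr.le hΓxr.le]
        _ = (x + r) ^ (1 - r) * (Gamma (x + r) ^ r * Gamma (x + r) ^ (1 - r)) := by ring
        _ = (x + r) ^ (1 - r) * Gamma (x + r) := by
            rw [← rpow_add hΓxr]; norm_num
    exact key.trans (rpow_le_rpow hxr.le (by linarith) (by linarith))
end

section
/- Let α, β, γ be real numbers with α+β < 0, α+γ < 0, and α+β+γ < 0. Then there exist ω > 0 and C > 0 such that for all natural numbers m ≥ n: (m+1)^α (n+1)^β (m-n+1)^γ ≤ C (m+1)^{-ω} (n+1)^{-ω}. -/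
lemma three_exp_key (A B D a b c : ℝ) (hA : 1 ≤ A) (hB : 1 ≤ B) (hD : 1 ≤ D)
    (hBA : B ≤ A) (hDA : D ≤ A) (hABD : A ≤ B * D)
    (hab : a + b ≤ 0) (hac : a + c ≤ 0) (habc : a + b + c ≤ 0) :
    A ^ a * B ^ b * D ^ c ≤ 1 := by
  have hA0 : (0:ℝ) < A := lt_of_lt_of_le one_pos hA
  have hB0 : (0:ℝ) < B := lt_of_lt_of_le one_pos hB
  have hD0 : (0:ℝ) < D := lt_of_lt_of_le one_pos hD
  rcases le_or_gt 0 c with hc | hc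
  · have hDc : D ^ c ≤ A ^ c := Real.rpow_le_rpow hD0.le hDA hc
    rcases le_or_gt 0 b with hb | hb
    · have hBb : B ^ b ≤ A ^ b := Real.rpow_le_rpow hB0.le hBA hb
      calc A ^ a * B ^ b * D ^ c ≤ A ^ a * A ^ b * A ^ c := by
            gcongr
        _ = A ^ (a + b + c) := by rw [← Real.rpow_add hA0, ← Real.rpow_add hA0]
        _ ≤ 1 := Real.rpow_le_one_of_one_le_of_nonpos hA habc
    · have hBb : B ^ b ≤ 1 := Real.rpow_le_one_of_one_le_of_nonpos hB hb.le
      calc A ^ a * B ^ b * D ^ c ≤ A ^ a * 1 * A ^ c := by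
            gcongr
        _ = A ^ (a + c) := by rw [mul_one, ← Real.rpow_add hA0]
        _ ≤ 1 := Real.rpow_le_one_of_one_le_of_nonpos hA hac
  · have hDc : D ^ c ≤ 1 := Real.rpow_le_one_of_one_le_of_nonpos hD hc.le
    rcases le_or_gt a 0 with ha | ha
    · have hAa : A ^ a ≤ 1 := Real.rpow_le_one_of_one_le_of_nonpos hA ha
      rcases le_or_gt b 0 with hb | hb
      · have hBb : B ^ b ≤ 1 := Real.rpow_le_one_of_one_le_of_nonpos hB hb
        calc A ^ a * B ^ b * D ^ c ≤ 1 * 1 * 1 := by gcongr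
          _ = 1 := by ring
      · have hBb : B ^ b ≤ A ^ b := Real.rpow_le_rpow hB0.le hBA hb.le
        calc A ^ a * B ^ b * D ^ c ≤ A ^ a * A ^ b * 1 := by
              gcongr
          _ = A ^ (a + b) := by rw [mul_one, ← Real.rpow_add hA0]
          _ ≤ 1 := Real.rpow_le_one_of_one_le_of_nonpos hA hab
    · have hAa : A ^ a ≤ B ^ a * D ^ a := by
        rw [← Real.mul_rpow hB0.le hD0.le]
        exact Real.rpow_le_rpow hA0.le hABD ha.le
      calc A ^ a * B ^ b * D ^ c ≤ (B ^ a * D ^ a) * B ^ b * D ^ c := by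
            gcongr
        _ = B ^ (a + b) * D ^ (a + c) := by
            rw [Real.rpow_add hB0, Real.rpow_add hD0]; ring
        _ ≤ 1 * 1 := mul_le_mul (Real.rpow_le_one_of_one_le_of_nonpos hB hab)
            (Real.rpow_le_one_of_one_le_of_nonpos hD hac)
            (Real.rpow_pos_of_pos hD0 _).le zero_le_one
        _ = 1 := by ring

theorem three_exponent_estimate (α β γ : ℝ)
    (h1 : α + β < 0) (h2 : α + γ < 0) (h3 : α + β + γ < 0) :
    ∃ ω > (0 : ℝ), ∃ C > (0 : ℝ), ∀ m n : ℕ, n ≤ m →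
      ((m : ℝ) + 1) ^ α * ((n : ℝ) + 1) ^ β * ((m : ℝ) - (n : ℝ) + 1) ^ γ
        ≤ C * ((m : ℝ) + 1) ^ (-ω) * ((n : ℝ) + 1) ^ (-ω) := by
  set ω : ℝ := min (-(α + β)) (min (-(α + γ)) (-(α + β + γ))) / 4 with hω
  have hω1 : ω ≤ -(α + β) / 4 := by
    apply div_le_div_of_nonneg_right ?_ (by norm_num) |>.trans_eq rfl
    exact min_le_left _ _
  have hω2 : ω ≤ -(α + γ) / 4 := by
    apply div_le_div_of_nonneg_right ?_ (by norm_num) |>.trans_eq rfl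
    exact (min_le_right _ _).trans (min_le_left _ _)
  have hω3 : ω ≤ -(α + β + γ) / 4 := by
    apply div_le_div_of_nonneg_right ?_ (by norm_num) |>.trans_eq rfl
    exact (min_le_right _ _).trans (min_le_right _ _)
  have hωpos : 0 < ω := by
    apply div_pos _ (by norm_num)
    simp only [lt_min_iff]
    constructor <;> [linarith; constructor <;> linarith]
  refine ⟨ω, hωpos, 1, one_pos, fun m n hnm => ?_⟩
  set A : ℝ := (m : ℝ) + 1 with hA
  set B : ℝ := (n : ℝ) + 1 with hB
  set D : ℝ := (m : ℝ) - (n : ℝ) + 1 with hD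
  have hnm' : (n : ℝ) ≤ (m : ℝ) := Nat.cast_le.mpr hnm
  have hm0 : (0:ℝ) ≤ (m:ℝ) := Nat.cast_nonneg m
  have hn0 : (0:ℝ) ≤ (n:ℝ) := Nat.cast_nonneg n
  have h1A : 1 ≤ A := by rw [hA]; linarith
  have h1B : 1 ≤ B := by rw [hB]; linarith
  have h1D : 1 ≤ D := by rw [hD]; linarith
  have hBA : B ≤ A := by rw [hA, hB]; linarith
  have hDA : D ≤ A := by rw [hA, hD]; linarith
  have hABD : A ≤ B * D := by
    have hn0 : (0:ℝ) ≤ (n:ℝ) := Nat.cast_nonneg n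
    nlinarith
  have hA0 : (0:ℝ) < A := lt_of_lt_of_le one_pos h1A
  have hB0 : (0:ℝ) < B := lt_of_lt_of_le one_pos h1B
  have key := three_exp_key A B D (α + ω) (β + ω) γ h1A h1B h1D hBA hDA hABD
    (by linarith) (by linarith) (by linarith)
  have hkey : A ^ α * A ^ ω * (B ^ β * B ^ ω) * D ^ γ ≤ 1 := by
    rw [← Real.rpow_add hA0, ← Real.rpow_add hB0]; exact key
  have hAω : (0:ℝ) < A ^ ω := Real.rpow_pos_of_pos hA0 ω
  have hBω : (0:ℝ) < B ^ ω := Real.rpow_pos_of_pos hB0 ω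
  rw [Real.rpow_neg hA0.le, Real.rpow_neg hB0.le, one_mul]
  calc A ^ α * B ^ β * D ^ γ ≤ (1 / (A ^ ω * B ^ ω)) := by
        rw [le_div_iff₀ (by positivity)]
        calc A ^ α * B ^ β * D ^ γ * (A ^ ω * B ^ ω)
            = A ^ α * A ^ ω * (B ^ β * B ^ ω) * D ^ γ := by ring
          _ ≤ 1 := hkey
    _ = (A ^ ω)⁻¹ * (B ^ ω)⁻¹ := by rw [one_div, mul_inv]
end

section
/- Define real numbers Σ_{k,ℓ} for naturals k ≥ ℓ with k+ℓ even, depending on parameters 0 < u < 1 and σ > u - 1/2, by: Σ_{2m,0} = ∏_{i=1}^{m}(1 - (1-u)/i); Σ_{2m,2n} = Σ_{2m-1,2n-1} + u Σ_{j=0}^{n-1} [(n-1)! Γ(j+1/2+σ)/(j! Γ(n+1/2+σ))] Σ_{2m,2j} for n ≥ 1; and Σ_{2m+1,2n+1} = Σ_{2m,2n} - u Σ_{j=0}^{n} [n! Γ(j+1/2+σ)/(j! Γ(n+3/2+σ))] Σ_{2m,2j}. Then Σ_{k,ℓ} > 0 for all such k, ℓ. -/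
/-- Even–even part: `SigEE u σ m n` is `Σ_{2m,2n}` of the recursive definition. -/
noncomputable def SigEE (u σ : ℝ) : ℕ → ℕ → ℝ
  | m, 0 => ∏ i ∈ Finset.Icc 1 m, (1 - (1 - u) / (i : ℝ))
  | m, n + 1 =>
      (SigEE u σ (m - 1) n
        - u * ∑ j ∈ (Finset.range (n + 1)).attach,
            ((n.factorial : ℝ) * Real.Gamma ((j : ℕ) + 1/2 + σ) /
              ((j : ℕ).factorial * Real.Gamma ((n : ℝ) + 3/2 + σ))) * SigEE u σ (m - 1) (j : ℕ))
      + u * ∑ j ∈ (Finset.range (n + 1)).attach,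
            ((n.factorial : ℝ) * Real.Gamma ((j : ℕ) + 1/2 + σ) /
              ((j : ℕ).factorial * Real.Gamma (((n : ℝ) + 1) + 1/2 + σ))) * SigEE u σ m (j : ℕ)
  termination_by m n => n
  decreasing_by
  · omega
  · exact Finset.mem_range.mp j.2
  · exact Finset.mem_range.mp j.2

/-- Odd–odd part: `SigOO u σ m n` is `Σ_{2m+1,2n+1}` of the recursive definition. -/
noncomputable def SigOO (u σ : ℝ) (m n : ℕ) : ℝ :=
  SigEE u σ m n - u * ∑ j ∈ Finset.range (n + 1),
    ((n.factorial : ℝ) * Real.Gamma ((j : ℝ) + 1/2 + σ) /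
      ((j.factorial : ℝ) * Real.Gamma ((n : ℝ) + 3/2 + σ))) * SigEE u σ m j

/-- The coefficient `c n j = n! Γ(j+1/2+σ) / (j! Γ(n+3/2+σ))`. -/
noncomputable def cc (σ : ℝ) (n j : ℕ) : ℝ :=
  (n.factorial : ℝ) * Real.Gamma ((j : ℝ) + 1/2 + σ) /
    ((j.factorial : ℝ) * Real.Gamma ((n : ℝ) + 3/2 + σ))

/-- Iterated backward finite difference of `SigEE` in its first index. -/
noncomputable def Td (u σ : ℝ) : ℕ → ℕ → ℕ → ℝ
  | 0 => SigEE u σ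
  | k + 1 => fun m n => Td u σ k (m - 1) n - Td u σ k m n

lemma cc_pos {σ : ℝ} (hσ : -(1/2) < σ) (n j : ℕ) : 0 < cc σ n j := by
  have h1 : (0:ℝ) < (j : ℝ) + 1/2 + σ := by
    have : (0:ℝ) ≤ (j:ℝ) := Nat.cast_nonneg j
    linarith
  have h2 : (0:ℝ) < (n : ℝ) + 3/2 + σ := by
    have : (0:ℝ) ≤ (n:ℝ) := Nat.cast_nonneg n
    linarith
  have := Real.Gamma_pos_of_pos h1
  have := Real.Gamma_pos_of_pos h2
  have hnf : (0:ℝ) < (n.factorial : ℝ) := by positivity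
  have hjf : (0:ℝ) < (j.factorial : ℝ) := by positivity
  exact div_pos (by positivity) (by positivity)

lemma gamma_sum {σ : ℝ} (hσ : -(1/2) < σ) (n : ℕ) :
    ∑ j ∈ Finset.range (n + 1), Real.Gamma ((j : ℝ) + 1/2 + σ) / (j.factorial : ℝ)
      = Real.Gamma ((n : ℝ) + 3/2 + σ) / ((σ + 1/2) * (n.factorial : ℝ)) := by
  have hs0 : σ + 1/2 ≠ 0 := by intro h; linarith
  induction n with
  | zero =>
      rw [Finset.sum_range_one]
      simp only [Nat.cast_zero, Nat.factorial_zero, Nat.cast_one, zero_add, div_one, mul_one]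
      rw [show (3:ℝ)/2 + σ = (1/2 + σ) + 1 by ring,
        Real.Gamma_add_one (by intro h; linarith), eq_div_iff hs0]
      ring
  | succ n ih =>
      rw [Finset.sum_range_succ, ih]
      have hnf : (0:ℝ) < (n.factorial : ℝ) := by positivity
      have hn1 : (0:ℝ) < (n:ℝ) + 1 := by positivity
      have hne : (n:ℝ) + 3/2 + σ ≠ 0 := by
        have : (0:ℝ) ≤ (n:ℝ) := Nat.cast_nonneg n
        intro h; linarith
      push_cast [Nat.factorial_succ]
      rw [show (n:ℝ) + 1 + 1/2 + σ = (n:ℝ) + 3/2 + σ by ring,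
        show (n:ℝ) + 1 + 3/2 + σ = ((n:ℝ) + 3/2 + σ) + 1 by ring,
        Real.Gamma_add_one hne]
      set G := Real.Gamma ((n:ℝ) + 3/2 + σ) with hG
      have hnf' : (n.factorial : ℝ) ≠ 0 := ne_of_gt hnf
      have hn1' : (n:ℝ) + 1 ≠ 0 := ne_of_gt hn1
      have hs : (0:ℝ) < σ + 1/2 := by linarith
      rw [div_add_div _ _ (mul_ne_zero hs0 hnf') (mul_ne_zero hn1' hnf'),
        div_eq_div_iff (mul_ne_zero (mul_ne_zero hs0 hnf') (mul_ne_zero hn1' hnf'))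
          (mul_ne_zero hs0 (mul_ne_zero hn1' hnf'))]
      ring

lemma cc_sum {σ : ℝ} (hσ : -(1/2) < σ) (n : ℕ) :
    ∑ j ∈ Finset.range (n + 1), cc σ n j = 1 / (σ + 1/2) := by
  have key := gamma_sum hσ n
  have hg : Real.Gamma ((n:ℝ) + 3/2 + σ) > 0 := by
    apply Real.Gamma_pos_of_pos
    have : (0:ℝ) ≤ (n:ℝ) := Nat.cast_nonneg n
    linarith
  have hnf : (0:ℝ) < (n.factorial : ℝ) := by positivity
  have hs : (0:ℝ) < σ + 1/2 := by linarith
  have : ∑ j ∈ Finset.range (n + 1), cc σ n j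
      = ((n.factorial : ℝ) / Real.Gamma ((n : ℝ) + 3/2 + σ)) *
        ∑ j ∈ Finset.range (n + 1), Real.Gamma ((j : ℝ) + 1/2 + σ) / (j.factorial : ℝ) := by
    rw [Finset.mul_sum]
    apply Finset.sum_congr rfl
    intro j _
    unfold cc
    have hjf : (0:ℝ) < (j.factorial : ℝ) := by positivity
    field_simp
  rw [this, key]
  set G := Real.Gamma ((n:ℝ) + 3/2 + σ) with hG
  have hG0 : G ≠ 0 := ne_of_gt hg
  have hnf' : (n.factorial : ℝ) ≠ 0 := ne_of_gt hnf
  have hs0 : σ + 1/2 ≠ 0 := ne_of_gt hs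
  rw [div_mul_div_comm,
    div_eq_div_iff (mul_ne_zero hG0 (mul_ne_zero hs0 hnf')) hs0]
  ring

/-- The recursion for `SigEE`, rewritten with `cc` and ordinary range sums. -/
lemma sigEE_rec (u σ : ℝ) (m n : ℕ) :
    SigEE u σ m (n + 1)
      = (SigEE u σ (m - 1) n - u * ∑ j ∈ Finset.range (n + 1), cc σ n j * SigEE u σ (m - 1) j)
        + u * ∑ j ∈ Finset.range (n + 1), cc σ n j * SigEE u σ m j := by
  unfold cc
  rw [SigEE]
  rw [show ((n:ℝ) + 1) + 1/2 + σ = (n:ℝ) + 3/2 + σ from by ring]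
  rw [Finset.sum_attach (Finset.range (n+1)) (fun j =>
      ((n.factorial : ℝ) * Real.Gamma ((j:ℝ) + 1/2 + σ) /
        ((j.factorial : ℝ) * Real.Gamma ((n:ℝ) + 3/2 + σ))) * SigEE u σ (m - 1) j),
    Finset.sum_attach (Finset.range (n+1)) (fun j =>
      ((n.factorial : ℝ) * Real.Gamma ((j:ℝ) + 1/2 + σ) /
        ((j.factorial : ℝ) * Real.Gamma ((n:ℝ) + 3/2 + σ))) * SigEE u σ m j)]

/-- The differences `Td` satisfy the same recursion. -/
lemma td_rec (u σ : ℝ) (k m n : ℕ) :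
    Td u σ k m (n + 1)
      = (Td u σ k (m - 1) n - u * ∑ j ∈ Finset.range (n + 1), cc σ n j * Td u σ k (m - 1) j)
        + u * ∑ j ∈ Finset.range (n + 1), cc σ n j * Td u σ k m j := by
  induction k generalizing m with
  | zero => exact sigEE_rec u σ m n
  | succ k ih =>
      show Td u σ k (m - 1) (n+1) - Td u σ k m (n+1) = _
      rw [ih (m-1), ih m]
      have hsub : ∀ a b : ℕ → ℝ,
          (∑ j ∈ Finset.range (n+1), cc σ n j * (a j - b j))
            = (∑ j ∈ Finset.range (n+1), cc σ n j * a j)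
              - ∑ j ∈ Finset.range (n+1), cc σ n j * b j := by
        intro a b
        rw [← Finset.sum_sub_distrib]
        apply Finset.sum_congr rfl
        intro j _; ring
      show _ = (Td u σ k (m-1-1) n - Td u σ k (m-1) n
          - u * ∑ j ∈ Finset.range (n+1), cc σ n j *
              (Td u σ k (m-1-1) j - Td u σ k (m-1) j))
        + u * ∑ j ∈ Finset.range (n+1), cc σ n j *
              (Td u σ k (m-1) j - Td u σ k m j)
      rw [hsub, hsub]
      ring

/-- Base values of the differences: positivity and one-step ratio. -/
lemma td_base {u σ : ℝ} (hu0 : 0 < u) (hu1 : u < 1) :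
    ∀ k : ℕ, ∀ m : ℕ, k ≤ m → 0 < Td u σ k m 0 ∧
      Td u σ k (m + 1) 0 = (((m : ℝ) - (k : ℝ) + u) / ((m : ℝ) + 1)) * Td u σ k m 0 := by
  intro k
  induction k with
  | zero =>
      intro m _
      constructor
      · show 0 < SigEE u σ m 0
        rw [SigEE]
        apply Finset.prod_pos
        intro i hi
        have h1 : 1 ≤ i := (Finset.mem_Icc.mp hi).1
        have hi1 : (1:ℝ) ≤ (i:ℝ) := by exact_mod_cast h1
        have hip : (0:ℝ) < (i:ℝ) := by linarith
        have : (1 - u) / (i:ℝ) ≤ (1 - u) / 1 :=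
          div_le_div_of_nonneg_left (by linarith) (by norm_num) hi1
        simp at this
        linarith
      · show SigEE u σ (m+1) 0 = _ * SigEE u σ m 0
        rw [SigEE, SigEE, Finset.prod_Icc_succ_top (by omega)]
        have hm1 : (0:ℝ) < (m:ℝ) + 1 := by positivity
        push_cast
        field_simp
        ring
  | succ k ih =>
      intro m hm
      have hmk : k ≤ m - 1 := by omega
      obtain ⟨m', rfl⟩ : ∃ m', m = m' + 1 := ⟨m - 1, by omega⟩
      have hk' : k ≤ m' := by omega
      obtain ⟨p1, r1⟩ := ih m' hk'
      obtain ⟨p2, r2⟩ := ih (m' + 1) (by omega)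
      have hstep : ∀ q : ℕ, k ≤ q →
          Td u σ (k+1) (q+1) 0 = (((k:ℝ) + 1 - u) / ((q:ℝ) + 1)) * Td u σ k q 0 := by
        intro q hq
        obtain ⟨pq, rq⟩ := ih q hq
        show Td u σ k (q + 1 - 1) 0 - Td u σ k (q+1) 0 = _
        simp only [Nat.add_sub_cancel]
        rw [rq]
        have hq1 : (0:ℝ) < (q:ℝ) + 1 := by positivity
        field_simp
        ring
      have hpos : 0 < Td u σ (k+1) (m'+1) 0 := by
        rw [hstep m' hk']
        have h1 : (0:ℝ) < (k:ℝ) + 1 - u := by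
          have : (0:ℝ) ≤ (k:ℝ) := Nat.cast_nonneg k
          linarith
        have h2 : (0:ℝ) < (m':ℝ) + 1 := by positivity
        positivity
      refine ⟨hpos, ?_⟩
      rw [hstep (m'+1) (by omega), hstep m' hk', r1]
      have hkm : (k:ℝ) ≤ (m':ℝ) := by exact_mod_cast hk'
      have h2 : (0:ℝ) < (m':ℝ) + 1 := by positivity
      have h3 : (0:ℝ) < (m':ℝ) + 1 + 1 := by positivity
      push_cast
      field_simp
      ring

/-- Main induction: positivity and monotonicity in the second index for all
difference orders. -/
lemma td_main {u σ : ℝ} (hu0 : 0 < u) (hu1 : u < 1) (hσ : u - 1/2 < σ) :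
    ∀ n k m : ℕ, k + n ≤ m →
      0 < Td u σ k m n ∧ ∀ j ≤ n, Td u σ k m j ≤ Td u σ k m n := by
  have hσ' : -(1/2:ℝ) < σ := by linarith
  have hs : (0:ℝ) < σ + 1/2 := by linarith
  have hq : u / (σ + 1/2) < 1 := by
    rw [div_lt_one hs]; linarith
  have hq0 : 0 < 1 - u / (σ + 1/2) := by linarith
  intro n
  induction n using Nat.strong_induction_on with
  | _ n IH =>
    -- helper: the "odd" combination is at least (1 - u/(σ+1/2)) times the top value
    have hOO : ∀ n' k m : ℕ, n' < n →
        (∀ j ≤ n', 0 < Td u σ k m j ∧ Td u σ k m j ≤ Td u σ k m n') →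
        (1 - u / (σ + 1/2)) * Td u σ k m n'
          ≤ Td u σ k m n' - u * ∑ j ∈ Finset.range (n' + 1), cc σ n' j * Td u σ k m j := by
      intro n' k m _ h
      have hsum : ∑ j ∈ Finset.range (n' + 1), cc σ n' j * Td u σ k m j
          ≤ (1 / (σ + 1/2)) * Td u σ k m n' := by
        calc ∑ j ∈ Finset.range (n' + 1), cc σ n' j * Td u σ k m j
            ≤ ∑ j ∈ Finset.range (n' + 1), cc σ n' j * Td u σ k m n' := by
              apply Finset.sum_le_sum
              intro j hj
              have hj' : j ≤ n' := by
                have := Finset.mem_range.mp hj; omega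
              exact mul_le_mul_of_nonneg_left (h j hj').2 (le_of_lt (cc_pos hσ' n' j))
          _ = (1 / (σ + 1/2)) * Td u σ k m n' := by
              rw [← Finset.sum_mul, cc_sum hσ' n']
      have e1 : u * (1 / (σ + 1/2) * Td u σ k m n')
          = Td u σ k m n' - (1 - u / (σ + 1/2)) * Td u σ k m n' := by ring
      linarith [mul_le_mul_of_nonneg_left hsum (le_of_lt hu0), e1]
    match n, IH with
    | 0, _ =>
        intro k m hkm
        refine ⟨(td_base hu0 hu1 k m (by omega)).1, ?_⟩
        intro j hj
        interval_cases j
        exact le_refl _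
    | Nat.succ n, IH =>
        intro k m hkm
        -- positivity and monotonicity for all j ≤ n at (k, m) and (k, m-1), (k+1, m)
        have IHn : ∀ j ≤ n, ∀ k' m' : ℕ, k' + j ≤ m' →
            0 < Td u σ k' m' j ∧ ∀ i ≤ j, Td u σ k' m' i ≤ Td u σ k' m' j :=
          fun j hj k' m' h => IH j (by omega) k' m' h
        have hmono_km : ∀ j ≤ n, Td u σ k m j ≤ Td u σ k m n := by
          intro j hj
          calc Td u σ k m j ≤ Td u σ k m j := le_refl _
            _ ≤ Td u σ k m n := by
                have := (IHn n (le_refl n) k m (by omega)).2 j hj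
                exact this
        have hpos_km : ∀ j ≤ n, 0 < Td u σ k m j :=
          fun j hj => (IHn j hj k m (by omega)).1
        -- the odd-odd value at (k, m-1, n) is positive
        have hm1 : k + n ≤ m - 1 := by omega
        have hOOm1 : 0 < Td u σ k (m-1) n
            - u * ∑ j ∈ Finset.range (n + 1), cc σ n j * Td u σ k (m-1) j := by
          have h1 := hOO n k (m-1) (by omega)
            (fun j hj => ⟨(IHn j hj k (m-1) (by omega)).1,
              (IHn n (le_refl n) k (m-1) (by omega)).2 j hj⟩)
          have h2 : 0 < Td u σ k (m-1) n := (IHn n (le_refl n) k (m-1) (by omega)).1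
          nlinarith [mul_pos hq0 h2]
        have hposSucc : 0 < Td u σ k m (n + 1) := by
          rw [td_rec]
          have hsum : 0 < ∑ j ∈ Finset.range (n + 1), cc σ n j * Td u σ k m j := by
            apply Finset.sum_pos
            · intro j hj
              have hj' : j ≤ n := by have := Finset.mem_range.mp hj; omega
              exact mul_pos (cc_pos hσ' n j) (hpos_km j hj')
            · exact ⟨0, Finset.mem_range.mpr (by omega)⟩
          nlinarith [mul_pos hu0 hsum]
        refine ⟨hposSucc, ?_⟩
        -- monotonicity: Td k m n ≤ Td k m (n+1)
        have hstep : Td u σ k m n ≤ Td u σ k m (n + 1) := by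
          have hrec := td_rec u σ k m n
          -- Td k m (n+1) - Td k m n = Td (k+1) m n - u Σ cc (Td (k+1) m j)
          have hdiff : Td u σ k m (n + 1) - Td u σ k m n
              = Td u σ (k+1) m n
                - u * ∑ j ∈ Finset.range (n + 1), cc σ n j * Td u σ (k+1) m j := by
            rw [hrec]
            show _ = (Td u σ k (m-1) n - Td u σ k m n) - u * ∑ j ∈ Finset.range (n+1),
              cc σ n j * (Td u σ k (m-1) j - Td u σ k m j)
            have : ∑ j ∈ Finset.range (n+1),
                cc σ n j * (Td u σ k (m-1) j - Td u σ k m j)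
                = (∑ j ∈ Finset.range (n+1), cc σ n j * Td u σ k (m-1) j)
                  - ∑ j ∈ Finset.range (n+1), cc σ n j * Td u σ k m j := by
              rw [← Finset.sum_sub_distrib]
              exact Finset.sum_congr rfl (fun j _ => by ring)
            rw [this]
            ring
          have hOOk1 := hOO n (k+1) m (by omega)
            (fun j hj => ⟨(IHn j hj (k+1) m (by omega)).1,
              (IHn n (le_refl n) (k+1) m (by omega)).2 j hj⟩)
          have hposk1 : 0 < Td u σ (k+1) m n := (IHn n (le_refl n) (k+1) m (by omega)).1
          nlinarith [mul_pos hq0 hposk1]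
        intro j hj
        rcases Nat.lt_succ_iff_lt_or_eq.mp (Nat.lt_succ_of_le hj) with h | h
        · exact le_trans (hmono_km j (by omega)) hstep
        · rw [h]

theorem sigma_pos (u σ : ℝ) (hu0 : 0 < u) (hu1 : u < 1) (hσ : u - 1/2 < σ) :
    ∀ m n : ℕ, n ≤ m → 0 < SigEE u σ m n ∧ 0 < SigOO u σ m n := by
  have hσ' : -(1/2:ℝ) < σ := by linarith
  have hs : (0:ℝ) < σ + 1/2 := by linarith
  have hq0 : 0 < 1 - u / (σ + 1/2) := by
    have : u / (σ + 1/2) < 1 := by rw [div_lt_one hs]; linarith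
    linarith
  intro m n hnm
  have main := td_main hu0 hu1 hσ n 0 m (by omega)
  have hEE : ∀ j ≤ n, 0 < SigEE u σ m j ∧ SigEE u σ m j ≤ SigEE u σ m n := by
    intro j hj
    have h1 := (td_main hu0 hu1 hσ j 0 m (by omega)).1
    exact ⟨h1, main.2 j hj⟩
  refine ⟨main.1, ?_⟩
  unfold SigOO
  have hOOsum : ∑ j ∈ Finset.range (n + 1),
      ((n.factorial : ℝ) * Real.Gamma ((j : ℝ) + 1/2 + σ) /
        ((j.factorial : ℝ) * Real.Gamma ((n : ℝ) + 3/2 + σ))) * SigEE u σ m j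
      = ∑ j ∈ Finset.range (n + 1), cc σ n j * SigEE u σ m j := by
    exact Finset.sum_congr rfl (fun j _ => rfl)
  rw [hOOsum]
  have hsum : ∑ j ∈ Finset.range (n + 1), cc σ n j * SigEE u σ m j
      ≤ (1 / (σ + 1/2)) * SigEE u σ m n := by
    calc ∑ j ∈ Finset.range (n + 1), cc σ n j * SigEE u σ m j
        ≤ ∑ j ∈ Finset.range (n + 1), cc σ n j * SigEE u σ m n := by
          apply Finset.sum_le_sum
          intro j hj
          have hj' : j ≤ n := by have := Finset.mem_range.mp hj; omega
          exact mul_le_mul_of_nonneg_left (hEE j hj').2 (le_of_lt (cc_pos hσ' n j))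
      _ = (1 / (σ + 1/2)) * SigEE u σ m n := by
          rw [← Finset.sum_mul, cc_sum hσ' n]
  have hpos : 0 < SigEE u σ m n := main.1
  have hmul := mul_le_mul_of_nonneg_left hsum (le_of_lt hu0)
  have e1 : u * (1 / (σ + 1/2) * SigEE u σ m n)
      = SigEE u σ m n - (1 - u / (σ + 1/2)) * SigEE u σ m n := by ring
  nlinarith [mul_pos hq0 hpos, hmul, e1]
end

section
/- With Σ_{k,ℓ} defined as in the recursive definition (parameters 0 < u < 1, σ > u - 1/2), for every k = 2m > 0 one has Σ_{k,0} = (u/m) Σ_{j=0}^{m-1} Σ_{2j,0}. -/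
lemma SigEE_zero (u σ : ℝ) (m : ℕ) :
    SigEE u σ m 0 = ∏ i ∈ Finset.Icc 1 m, (1 - (1 - u) / (i : ℝ)) := by
  simp [SigEE]

lemma key (u : ℝ) : ∀ m : ℕ,
    u * ∑ j ∈ Finset.range (m + 1), ∏ i ∈ Finset.Icc 1 j, (1 - (1 - u) / (i : ℝ))
      = ((m : ℝ) + 1) * ∏ i ∈ Finset.Icc 1 (m + 1), (1 - (1 - u) / (i : ℝ)) := by
  intro m
  induction m with
  | zero => simp
  | succ k ih =>
      rw [Finset.sum_range_succ, Finset.prod_Icc_succ_top (by omega : 1 ≤ k + 1 + 1)]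
      rw [mul_add, ih, Finset.prod_Icc_succ_top (by omega : 1 ≤ k + 1)]
      have h1 : ((k : ℝ) + 1) ≠ 0 := by positivity
      have h2 : ((k : ℝ) + 2) ≠ 0 := by positivity
      push_cast
      field_simp
      ring

theorem sigma_k0_sum (u σ : ℝ) (hu0 : 0 < u) (hu1 : u < 1) (hσ : u - 1/2 < σ) :
    ∀ m : ℕ, 0 < m →
      SigEE u σ m 0 = u / (m : ℝ) * ∑ j ∈ Finset.range m, SigEE u σ j 0 := by
  rintro (_ | k) hm
  · omega
  have h := key u k
  simp only [SigEE_zero]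
  have h1 : ((k : ℝ) + 1) ≠ 0 := by positivity
  have h2 : (u : ℝ) ≠ 0 := ne_of_gt hu0
  push_cast
  rw [div_mul_eq_mul_div, eq_div_iff h1]
  linarith [h]
end

section
/- Let α, β, γ, δ be real numbers satisfying α+β < 0, α+γ < 0, α+β+γ < 0, α+β+δ+1 < 0, and α+β+γ+δ+1 < 0. Then there exist ω > 0 and C > 0 such that for all naturals m ≥ n: (m+1)^α (n+1)^β Σ_{p=0}^{n} (m-p+1)^γ (p+1)^δ ≤ C (m+1)^{-ω} (n+1)^{-ω}. -/
open Finset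

private lemma bern_step {s : ℝ} (hs0 : 0 < s) (hs1 : s ≤ 1) {x : ℝ} (hx : 0 ≤ x) :
    s * (x + 1) ^ (s - 1) ≤ (x + 1) ^ s - x ^ s := by
  have hx1 : (0:ℝ) < x + 1 := by linarith
  have h1 : (1:ℝ) + -(1/(x+1)) = x/(x+1) := by field_simp; ring
  have ht : (-1:ℝ) ≤ -(1/(x+1)) := by
    have : 1/(x+1) ≤ 1 := by rw [div_le_one hx1]; linarith
    linarith
  have hb := rpow_one_add_le_one_add_mul_self ht hs0.le hs1
  rw [h1] at hb
  have hb2 : (x/(x+1))^s * (x+1)^s ≤ (1 + s * -(1/(x+1))) * (x+1)^s :=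
    mul_le_mul_of_nonneg_right hb (Real.rpow_nonneg hx1.le s)
  have e1 : (x/(x+1))^s * (x+1)^s = x ^ s := by
    rw [Real.div_rpow hx hx1.le, div_mul_cancel₀]
    exact (Real.rpow_pos_of_pos hx1 s).ne'
  have e2 : (1 + s * -(1/(x+1))) * (x+1)^s = (x+1)^s - s * (x+1)^(s-1) := by
    have h3 : (x+1)^(s-1) = (x+1)^s / (x+1) := by
      rw [Real.rpow_sub hx1, Real.rpow_one]
    rw [h3]; field_simp; ring
  rw [e1, e2] at hb2
  linarith

private lemma sum_rpow_le {t : ℝ} (ht : -1 < t) :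
    ∃ K > (0:ℝ), ∀ n : ℕ, ∑ p ∈ Finset.range (n+1), ((p:ℝ)+1)^t ≤ K * ((n:ℝ)+1)^(t+1) := by
  rcases le_or_gt 0 t with h0 | h0
  · refine ⟨1, one_pos, fun n => ?_⟩
    rw [one_mul]
    calc ∑ p ∈ Finset.range (n+1), ((p:ℝ)+1)^t
        ≤ ∑ _p ∈ Finset.range (n+1), ((n:ℝ)+1)^t := by
          apply Finset.sum_le_sum
          intro p hp
          have hpn : p ≤ n := Nat.lt_succ_iff.mp (Finset.mem_range.mp hp)
          have : (p:ℝ) + 1 ≤ (n:ℝ)+1 := by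
            have : (p:ℝ) ≤ (n:ℝ) := by exact_mod_cast hpn
            linarith
          exact Real.rpow_le_rpow (by positivity) this h0
      _ = ((n:ℝ)+1) * ((n:ℝ)+1)^t := by
          rw [Finset.sum_const, Finset.card_range]; push_cast; ring
      _ = ((n:ℝ)+1)^(t+1) := by
          rw [Real.rpow_add (by positivity), Real.rpow_one]; ring
  · refine ⟨1/(t+1), one_div_pos.mpr (by linarith), fun n => ?_⟩
    rw [one_div, inv_mul_eq_div]
    induction n with
    | zero =>
      simp only [Nat.cast_zero, zero_add, Finset.range_one, Finset.sum_singleton,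
        Real.one_rpow]
      rw [le_div_iff₀ (by linarith)]
      linarith
    | succ n ih =>
      rw [Finset.sum_range_succ]
      have hb := bern_step (s := t+1) (by linarith) (by linarith) (x := (n:ℝ)+1) (by positivity)
      have h2 : t + 1 - 1 = t := by ring
      rw [h2] at hb
      have hcast : ((n+1:ℕ):ℝ) + 1 = ((n:ℝ)+1)+1 := by push_cast; ring
      rw [hcast]
      have hd : ((n:ℝ)+1+1)^t ≤ (((n:ℝ)+1+1)^(t+1) - ((n:ℝ)+1)^(t+1))/(t+1) := by
        rw [le_div_iff₀ (by linarith)]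
        calc ((n:ℝ)+1+1)^t * (t+1) = (t+1) * ((n:ℝ)+1+1)^t := by ring
          _ ≤ _ := hb
      have hsub : (((n:ℝ)+1+1)^(t+1) - ((n:ℝ)+1)^(t+1))/(t+1)
          = ((n:ℝ)+1+1)^(t+1)/(t+1) - ((n:ℝ)+1)^(t+1)/(t+1) := sub_div _ _ _
      rw [hsub] at hd
      linarith

private lemma rpow_comp_le {c u v : ℝ} (hu : 0 < u) (h2 : v ≤ 2*u) (huv : u ≤ v) :
    u ^ c ≤ 2 ^ |c| * v ^ c := by
  have hv : 0 < v := lt_of_lt_of_le hu huv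
  have h2c : (1:ℝ) ≤ 2 ^ |c| := by
    simpa using Real.rpow_le_rpow_of_exponent_le one_le_two (abs_nonneg c)
  rcases le_or_gt 0 c with h | h
  · calc u^c ≤ v^c := Real.rpow_le_rpow hu.le huv h
      _ = 1 * v^c := (one_mul _).symm
      _ ≤ 2^|c| * v^c := mul_le_mul_of_nonneg_right h2c (Real.rpow_nonneg hv.le c)
  · have hvu : v/2 ≤ u := by linarith
    calc u^c ≤ (v/2)^c := Real.rpow_le_rpow_of_nonpos (by linarith) hvu h.le
      _ = 2^(-c) * v^c := by
          rw [Real.div_rpow hv.le (by norm_num), Real.rpow_neg (by norm_num)]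
          ring
      _ = 2^|c| * v^c := by rw [abs_of_neg h]

private lemma rpow_comp_le' {c x y : ℝ} (hy : 0 < y) (hxy : y ≤ x) (h2 : x ≤ 2*y) :
    x ^ c ≤ 2 ^ |c| * y ^ c := by
  have h2c : (1:ℝ) ≤ 2 ^ |c| := by
    simpa using Real.rpow_le_rpow_of_exponent_le one_le_two (abs_nonneg c)
  rcases le_or_gt 0 c with h | h
  · calc x^c ≤ (2*y)^c := Real.rpow_le_rpow (by linarith) h2 h
      _ = 2^c * y^c := Real.mul_rpow (by norm_num) hy.le
      _ ≤ 2^|c| * y^c :=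
          mul_le_mul_of_nonneg_right
            (Real.rpow_le_rpow_of_exponent_le one_le_two (le_abs_self c))
            (Real.rpow_nonneg hy.le c)
  · calc x^c ≤ y^c := Real.rpow_le_rpow_of_nonpos hy hxy h.le
      _ = 1 * y^c := (one_mul _).symm
      _ ≤ 2^|c| * y^c := mul_le_mul_of_nonneg_right h2c (Real.rpow_nonneg hy.le c)

private lemma compare_le {a b ω x y : ℝ} (hy : 1 ≤ y) (hxy : y ≤ x)
    (ha : a ≤ -ω) (hab : a + b ≤ -(2*ω)) :
    x ^ a * y ^ b ≤ x ^ (-ω) * y ^ (-ω) := by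
  have hx : (1:ℝ) ≤ x := le_trans hy hxy
  have hx0 : (0:ℝ) < x := by linarith
  have hy0 : (0:ℝ) < y := by linarith
  have key : x ^ (a+ω) * y ^ (b+ω) ≤ 1 := by
    rcases le_or_gt (b+ω) 0 with h | h
    · have h1 : x ^ (a+ω) ≤ 1 := Real.rpow_le_one_of_one_le_of_nonpos hx (by linarith)
      have h2 : y ^ (b+ω) ≤ 1 := Real.rpow_le_one_of_one_le_of_nonpos hy h
      calc x^(a+ω)*y^(b+ω) ≤ 1*1 :=
            mul_le_mul h1 h2 (Real.rpow_nonneg hy0.le _) (by norm_num)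
        _ = 1 := one_mul 1
    · calc x^(a+ω)*y^(b+ω) ≤ x^(a+ω)*x^(b+ω) :=
            mul_le_mul_of_nonneg_left (Real.rpow_le_rpow hy0.le hxy h.le)
              (Real.rpow_nonneg hx0.le _)
        _ = x^(a+ω+(b+ω)) := (Real.rpow_add hx0 _ _).symm
        _ ≤ 1 := Real.rpow_le_one_of_one_le_of_nonpos hx (by linarith)
  have ea : x^a = x^(-ω)*x^(a+ω) := by rw [← Real.rpow_add hx0]; congr 1; ring
  have eb : y^b = y^(-ω)*y^(b+ω) := by rw [← Real.rpow_add hy0]; congr 1; ring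
  have er : x^(-ω)*x^(a+ω)*(y^(-ω)*y^(b+ω)) = x^(-ω)*y^(-ω)*(x^(a+ω)*y^(b+ω)) := by ring
  rw [ea, eb, er]
  calc x^(-ω)*y^(-ω)*(x^(a+ω)*y^(b+ω)) ≤ x^(-ω)*y^(-ω)*1 :=
        mul_le_mul_of_nonneg_left key (by positivity)
    _ = x^(-ω)*y^(-ω) := mul_one _

private lemma compare_le' {a b ω x y : ℝ} (hy : 1 ≤ y) (hxy : y ≤ x) (h2 : x ≤ 2*y)
    (hab : a + b ≤ -(2*ω)) :
    x ^ a * y ^ b ≤ 2^|a+ω| * (x ^ (-ω) * y ^ (-ω)) := by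
  have hx0 : (0:ℝ) < x := by linarith
  have hy0 : (0:ℝ) < y := by linarith
  have key : x ^ (a+ω) * y ^ (b+ω) ≤ 2^|a+ω| := by
    calc x^(a+ω)*y^(b+ω) ≤ (2^|a+ω| * y^(a+ω))*y^(b+ω) :=
          mul_le_mul_of_nonneg_right (rpow_comp_le' hy0 hxy h2)
            (Real.rpow_nonneg hy0.le _)
      _ = 2^|a+ω| * y^(a+ω+(b+ω)) := by rw [mul_assoc, ← Real.rpow_add hy0]
      _ ≤ 2^|a+ω| * 1 := by
          apply mul_le_mul_of_nonneg_left
            (Real.rpow_le_one_of_one_le_of_nonpos hy (by linarith))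
          positivity
      _ = 2^|a+ω| := mul_one _
  have ea : x^a = x^(-ω)*x^(a+ω) := by rw [← Real.rpow_add hx0]; congr 1; ring
  have eb : y^b = y^(-ω)*y^(b+ω) := by rw [← Real.rpow_add hy0]; congr 1; ring
  have er : x^(-ω)*x^(a+ω)*(y^(-ω)*y^(b+ω)) = x^(-ω)*y^(-ω)*(x^(a+ω)*y^(b+ω)) := by ring
  rw [ea, eb, er]
  calc x^(-ω)*y^(-ω)*(x^(a+ω)*y^(b+ω)) ≤ x^(-ω)*y^(-ω)*2^|a+ω| :=
        mul_le_mul_of_nonneg_left key (by positivity)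
    _ = 2^|a+ω| * (x^(-ω)*y^(-ω)) := by ring

theorem sum_power_estimate (α β γ δ : ℝ)
    (h1 : α + β < 0) (h2 : α + γ < 0) (h3 : α + β + γ < 0)
    (h4 : α + β + δ + 1 < 0) (h5 : α + β + γ + δ + 1 < 0) :
    ∃ ω > (0 : ℝ), ∃ C > (0 : ℝ), ∀ m n : ℕ, n ≤ m →
      ((m : ℝ) + 1) ^ α * ((n : ℝ) + 1) ^ β *
          ∑ p ∈ Finset.range (n + 1), ((m : ℝ) - (p : ℝ) + 1) ^ γ * ((p : ℝ) + 1) ^ δ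
        ≤ C * ((m : ℝ) + 1) ^ (-ω) * ((n : ℝ) + 1) ^ (-ω) := by
  set ε : ℝ := min (min (-(α+β)) (-(α+β+γ))) 1 / 2 with hεdef
  have hA : min (min (-(α+β)) (-(α+β+γ))) 1 ≤ -(α+β) :=
    le_trans (min_le_left _ _) (min_le_left _ _)
  have hB : min (min (-(α+β)) (-(α+β+γ))) 1 ≤ -(α+β+γ) :=
    le_trans (min_le_left _ _) (min_le_right _ _)
  have hCm : min (min (-(α+β)) (-(α+β+γ))) 1 ≤ 1 := min_le_right _ _
  have hε0 : 0 < ε := by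
    rw [hεdef]
    have : 0 < min (min (-(α+β)) (-(α+β+γ))) 1 := by
      rw [lt_min_iff, lt_min_iff]
      refine ⟨⟨by linarith, by linarith⟩, one_pos⟩
    linarith
  have hεβγ : ε < -(α+β+γ) := by rw [hεdef]; linarith
  have hε1 : ε ≤ 1/2 := by rw [hεdef]; linarith
  set δ' : ℝ := max δ (-1+ε) with hδ'def
  set γ' : ℝ := max γ (-1+ε) with hγ'def
  have hδ'l : -1 < δ' := lt_of_lt_of_le (by linarith) (le_max_right _ _)
  have hγ'l : -1 < γ' := lt_of_lt_of_le (by linarith) (le_max_right _ _)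
  have hδδ' : δ ≤ δ' := le_max_left _ _
  have hγγ' : γ ≤ γ' := le_max_left _ _
  have he1 : α + β + γ + δ' + 1 < 0 := by
    have : δ' < -(α+β+γ)-1 :=
      max_lt (by linarith) (by linarith)
    linarith
  have he2 : α + β + γ' + δ + 1 < 0 := by
    have : γ' < -(α+β+δ)-1 :=
      max_lt (by linarith) (by linarith)
    linarith
  obtain ⟨K1, hK1, hS1⟩ := sum_rpow_le hδ'l
  obtain ⟨K2, hK2, hS2⟩ := sum_rpow_le hγ'l
  set ω : ℝ := min (min (-(α+γ)) (-(α+β+γ+δ'+1))) (-(α+β+γ'+δ+1)) / 2 with hωdef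
  have hW1 : min (min (-(α+γ)) (-(α+β+γ+δ'+1))) (-(α+β+γ'+δ+1)) ≤ -(α+γ) :=
    le_trans (min_le_left _ _) (min_le_left _ _)
  have hW2 : min (min (-(α+γ)) (-(α+β+γ+δ'+1))) (-(α+β+γ'+δ+1)) ≤ -(α+β+γ+δ'+1) :=
    le_trans (min_le_left _ _) (min_le_right _ _)
  have hW3 : min (min (-(α+γ)) (-(α+β+γ+δ'+1))) (-(α+β+γ'+δ+1)) ≤ -(α+β+γ'+δ+1) :=
    min_le_right _ _
  have hω0 : 0 < ω := by
    rw [hωdef]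
    have : 0 < min (min (-(α+γ)) (-(α+β+γ+δ'+1))) (-(α+β+γ'+δ+1)) := by
      rw [lt_min_iff, lt_min_iff]
      refine ⟨⟨by linarith, by linarith⟩, by linarith⟩
    linarith
  have hωa : α + γ ≤ -ω := by rw [hωdef]; linarith
  have hωb : (α+γ) + (β+δ'+1) ≤ -(2*ω) := by rw [hωdef]; linarith
  have hωc : α + (β+δ+γ'+1) ≤ -(2*ω) := by rw [hωdef]; linarith
  have h2pos : ∀ r : ℝ, (0:ℝ) < 2^r := fun r => Real.rpow_pos_of_pos two_pos r
  have hc1 : (0:ℝ) < 2^|γ| *K1 := mul_pos (h2pos _) hK1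
  have hc3 : (0:ℝ) < 2^|δ| *K2*2^(γ'+1) := mul_pos (mul_pos (h2pos _) hK2) (h2pos _)
  have hc2 : (0:ℝ) < 2^|δ| *K2*2^(γ'+1)*2^|α+ω| := mul_pos hc3 (h2pos _)
  have hCpos : (0:ℝ) < 2^|γ| *K1 + 2^|δ| *K2*2^(γ'+1)*2^|α+ω| := by linarith
  refine ⟨ω, hω0, 2^|γ| *K1 + 2^|δ| *K2*2^(γ'+1)*2^|α+ω|, hCpos, fun m n hnm => ?_⟩
  have hy1 : (1:ℝ) ≤ (n:ℝ)+1 := by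
    have : (0:ℝ) ≤ (n:ℝ) := Nat.cast_nonneg n
    linarith
  have hyx : ((n:ℝ)+1) ≤ ((m:ℝ)+1) := by
    have : (n:ℝ) ≤ (m:ℝ) := by exact_mod_cast hnm
    linarith
  have hx0 : (0:ℝ) < (m:ℝ)+1 := by positivity
  have hy0 : (0:ℝ) < (n:ℝ)+1 := by positivity
  have hpref : (0:ℝ) ≤ ((m:ℝ)+1)^α * ((n:ℝ)+1)^β := by positivity
  -- pointwise bound, first kind (2p ≤ m)
  have piece1 : ∀ p ∈ Finset.range (n+1), 2*p ≤ m →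
      ((m:ℝ)-(p:ℝ)+1)^γ * ((p:ℝ)+1)^δ ≤ 2^|γ| * ((m:ℝ)+1)^γ * ((p:ℝ)+1)^δ' := by
    intro p hp h2p
    have hpn : p ≤ n := Nat.lt_succ_iff.mp (Finset.mem_range.mp hp)
    have hpm : (p:ℝ) ≤ (m:ℝ) := by exact_mod_cast le_trans hpn hnm
    have hub : (0:ℝ) < (m:ℝ)-(p:ℝ)+1 := by linarith
    have h2p' : (p:ℝ)*2 ≤ (m:ℝ) := by
      have : ((2*p:ℕ):ℝ) ≤ (m:ℝ) := by exact_mod_cast h2p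
      push_cast at this; linarith
    have hge : ((m:ℝ)+1) ≤ 2*((m:ℝ)-(p:ℝ)+1) := by linarith
    have hle : ((m:ℝ)-(p:ℝ)+1) ≤ (m:ℝ)+1 := by linarith
    have hg := rpow_comp_le (c := γ) hub hge hle
    have hd : ((p:ℝ)+1)^δ ≤ ((p:ℝ)+1)^δ' :=
      Real.rpow_le_rpow_of_exponent_le (by have : (0:ℝ) ≤ (p:ℝ) := Nat.cast_nonneg p; linarith) hδδ'
    calc ((m:ℝ)-(p:ℝ)+1)^γ * ((p:ℝ)+1)^δ
        ≤ (2^|γ| * ((m:ℝ)+1)^γ) * ((p:ℝ)+1)^δ' := by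
          apply mul_le_mul hg hd (Real.rpow_nonneg (by positivity) δ)
          positivity
      _ = 2^|γ| * ((m:ℝ)+1)^γ * ((p:ℝ)+1)^δ' := by ring
  -- pointwise bound, second kind (m < 2p)
  have piece2 : ∀ p ∈ Finset.range (n+1), m < 2*p →
      ((p:ℝ)+1)^δ ≤ 2^|δ| * ((n:ℝ)+1)^δ := by
    intro p hp h2p
    have hpn : p ≤ n := Nat.lt_succ_iff.mp (Finset.mem_range.mp hp)
    have hpy : ((p:ℝ)+1) ≤ (n:ℝ)+1 := by
      have : (p:ℝ) ≤ (n:ℝ) := by exact_mod_cast hpn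
      linarith
    have h2p' : ((m:ℝ)) < (p:ℝ)*2 := by
      have : (m:ℝ) < ((2*p:ℕ):ℝ) := by exact_mod_cast h2p
      push_cast at this; linarith
    have hnR : (n:ℝ) ≤ (m:ℝ) := by exact_mod_cast hnm
    have hge : ((n:ℝ)+1) ≤ 2*((p:ℝ)+1) := by linarith
    exact rpow_comp_le (by positivity) hge hpy
  -- first piece of the sum, valid always
  have hfirst :
      ((m:ℝ)+1)^α * ((n:ℝ)+1)^β * (2^|γ| * ((m:ℝ)+1)^γ * (K1 * ((n:ℝ)+1)^(δ'+1)))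
        ≤ 2^|γ| *K1 * (((m:ℝ)+1)^(-ω) * ((n:ℝ)+1)^(-ω)) := by
    have heq : ((m:ℝ)+1)^α * ((n:ℝ)+1)^β * (2^|γ| * ((m:ℝ)+1)^γ * (K1 * ((n:ℝ)+1)^(δ'+1)))
        = 2^|γ| *K1 * (((m:ℝ)+1)^(α+γ) * ((n:ℝ)+1)^(β+(δ'+1))) := by
      rw [Real.rpow_add hx0 α γ, Real.rpow_add hy0 β (δ'+1), Real.rpow_add hy0 δ' 1,
        Real.rpow_one]; ring
    rw [heq]
    apply mul_le_mul_of_nonneg_left _ (by positivity)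
    exact compare_le hy1 hyx hωa (by rw [show (α+γ)+(β+(δ'+1)) = (α+γ)+(β+δ'+1) from by ring]; exact hωb)
  rcases le_or_gt (2*n) m with h2n | h2n
  · -- Case I : n ≤ m/2, every p satisfies 2p ≤ m
    have hsum : ∑ p ∈ Finset.range (n+1), ((m:ℝ)-(p:ℝ)+1)^γ * ((p:ℝ)+1)^δ
        ≤ 2^|γ| * ((m:ℝ)+1)^γ * (K1 * ((n:ℝ)+1)^(δ'+1)) := by
      calc ∑ p ∈ Finset.range (n+1), ((m:ℝ)-(p:ℝ)+1)^γ * ((p:ℝ)+1)^δ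
          ≤ ∑ p ∈ Finset.range (n+1), 2^|γ| * ((m:ℝ)+1)^γ * ((p:ℝ)+1)^δ' := by
            apply Finset.sum_le_sum
            intro p hp
            exact piece1 p hp (by
              have := Nat.lt_succ_iff.mp (Finset.mem_range.mp hp); omega)
        _ = 2^|γ| * ((m:ℝ)+1)^γ * ∑ p ∈ Finset.range (n+1), ((p:ℝ)+1)^δ' := by
            rw [Finset.mul_sum]
        _ ≤ 2^|γ| * ((m:ℝ)+1)^γ * (K1 * ((n:ℝ)+1)^(δ'+1)) := by
            apply mul_le_mul_of_nonneg_left (hS1 n)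
            positivity
    calc ((m:ℝ)+1)^α * ((n:ℝ)+1)^β *
          ∑ p ∈ Finset.range (n+1), ((m:ℝ)-(p:ℝ)+1)^γ * ((p:ℝ)+1)^δ
        ≤ ((m:ℝ)+1)^α * ((n:ℝ)+1)^β *
            (2^|γ| * ((m:ℝ)+1)^γ * (K1 * ((n:ℝ)+1)^(δ'+1))) :=
          mul_le_mul_of_nonneg_left hsum hpref
      _ ≤ 2^|γ| *K1 * (((m:ℝ)+1)^(-ω) * ((n:ℝ)+1)^(-ω)) := hfirst
      _ ≤ (2^|γ| *K1 + 2^|δ| *K2*2^(γ'+1)*2^|α+ω|) * (((m:ℝ)+1)^(-ω) * ((n:ℝ)+1)^(-ω)) := by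
          apply mul_le_mul_of_nonneg_right _ (by positivity)
          have : (0:ℝ) ≤ 2^|δ| *K2*2^(γ'+1)*2^|α+ω| := hc2.le
          linarith
      _ = (2^|γ| *K1 + 2^|δ| *K2*2^(γ'+1)*2^|α+ω|) * ((m:ℝ)+1)^(-ω) * ((n:ℝ)+1)^(-ω) := by
          ring
  · -- Case II : m < 2n, comparable regime
    have hx2y : ((m:ℝ)+1) ≤ 2*((n:ℝ)+1) := by
      have : (m:ℝ) < ((2*n:ℕ):ℝ) := by exact_mod_cast h2n
      push_cast at this; linarith
    -- termwise bound
    have tb : ∀ p ∈ Finset.range (n+1),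
        ((m:ℝ)-(p:ℝ)+1)^γ * ((p:ℝ)+1)^δ ≤
          2^|γ| * ((m:ℝ)+1)^γ * ((p:ℝ)+1)^δ' + 2^|δ| * ((n:ℝ)+1)^δ * ((m:ℝ)-(p:ℝ)+1)^γ := by
      intro p hp
      have hpn : p ≤ n := Nat.lt_succ_iff.mp (Finset.mem_range.mp hp)
      have hpm : (p:ℝ) ≤ (m:ℝ) := by exact_mod_cast le_trans hpn hnm
      have hub : (0:ℝ) < (m:ℝ)-(p:ℝ)+1 := by linarith
      rcases le_or_gt (2*p) m with h | h
      · have h1 := piece1 p hp h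
        have hnn : (0:ℝ) ≤ 2^|δ| * ((n:ℝ)+1)^δ * ((m:ℝ)-(p:ℝ)+1)^γ := by positivity
        linarith
      · have hd := piece2 p hp h
        calc ((m:ℝ)-(p:ℝ)+1)^γ * ((p:ℝ)+1)^δ
            ≤ ((m:ℝ)-(p:ℝ)+1)^γ * (2^|δ| * ((n:ℝ)+1)^δ) :=
              mul_le_mul_of_nonneg_left hd (Real.rpow_nonneg hub.le γ)
          _ = 2^|δ| * ((n:ℝ)+1)^δ * ((m:ℝ)-(p:ℝ)+1)^γ := by ring
          _ ≤ _ := le_add_of_nonneg_left (by positivity)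
    -- sum of (m-p+1)^γ
    have hsumγ : ∑ p ∈ Finset.range (n+1), ((m:ℝ)-(p:ℝ)+1)^γ
        ≤ K2 * 2^(γ'+1) * ((n:ℝ)+1)^(γ'+1) := by
      have step1 : ∑ p ∈ Finset.range (n+1), ((m:ℝ)-(p:ℝ)+1)^γ
          ≤ ∑ p ∈ Finset.range (m+1), ((m:ℝ)-(p:ℝ)+1)^γ := by
        apply Finset.sum_le_sum_of_subset_of_nonneg
          (Finset.range_subset_range.mpr (by omega))
        intro p hp _
        have hpm : p ≤ m := Nat.lt_succ_iff.mp (Finset.mem_range.mp hp)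
        have : (p:ℝ) ≤ (m:ℝ) := by exact_mod_cast hpm
        exact Real.rpow_nonneg (by linarith) γ
      have step2 : ∑ p ∈ Finset.range (m+1), ((m:ℝ)-(p:ℝ)+1)^γ
          = ∑ q ∈ Finset.range (m+1), ((q:ℝ)+1)^γ := by
        rw [← Finset.sum_range_reflect (fun j => ((j:ℝ)+1)^γ) (m+1)]
        apply Finset.sum_congr rfl
        intro p hp
        have hpm : p ≤ m := Nat.lt_succ_iff.mp (Finset.mem_range.mp hp)
        have hcast : ((m+1-1-p:ℕ):ℝ) = (m:ℝ)-(p:ℝ) := by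
          have : m+1-1-p = m-p := by omega
          rw [this, Nat.cast_sub hpm]
        rw [hcast]
      have step3 : ∑ q ∈ Finset.range (m+1), ((q:ℝ)+1)^γ
          ≤ ∑ q ∈ Finset.range (m+1), ((q:ℝ)+1)^γ' := by
        apply Finset.sum_le_sum
        intro q _
        exact Real.rpow_le_rpow_of_exponent_le
          (by have : (0:ℝ) ≤ (q:ℝ) := Nat.cast_nonneg q; linarith) hγγ'
      have step4 : ∑ q ∈ Finset.range (m+1), ((q:ℝ)+1)^γ' ≤ K2 * ((m:ℝ)+1)^(γ'+1) := hS2 m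
      have step5 : K2 * ((m:ℝ)+1)^(γ'+1) ≤ K2 * 2^(γ'+1) * ((n:ℝ)+1)^(γ'+1) := by
        have h6 : ((m:ℝ)+1)^(γ'+1) ≤ (2*((n:ℝ)+1))^(γ'+1) :=
          Real.rpow_le_rpow hx0.le hx2y (by linarith)
        have h7 : (2*((n:ℝ)+1))^(γ'+1) = 2^(γ'+1) * ((n:ℝ)+1)^(γ'+1) :=
          Real.mul_rpow (by norm_num) hy0.le
        calc K2 * ((m:ℝ)+1)^(γ'+1) ≤ K2 * (2*((n:ℝ)+1))^(γ'+1) :=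
              mul_le_mul_of_nonneg_left h6 hK2.le
          _ = K2 * 2^(γ'+1) * ((n:ℝ)+1)^(γ'+1) := by rw [h7]; ring
      calc ∑ p ∈ Finset.range (n+1), ((m:ℝ)-(p:ℝ)+1)^γ
          ≤ ∑ p ∈ Finset.range (m+1), ((m:ℝ)-(p:ℝ)+1)^γ := step1
        _ = ∑ q ∈ Finset.range (m+1), ((q:ℝ)+1)^γ := step2
        _ ≤ ∑ q ∈ Finset.range (m+1), ((q:ℝ)+1)^γ' := step3
        _ ≤ K2 * ((m:ℝ)+1)^(γ'+1) := step4
        _ ≤ K2 * 2^(γ'+1) * ((n:ℝ)+1)^(γ'+1) := step5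
    have hsum : ∑ p ∈ Finset.range (n+1), ((m:ℝ)-(p:ℝ)+1)^γ * ((p:ℝ)+1)^δ
        ≤ 2^|γ| * ((m:ℝ)+1)^γ * (K1 * ((n:ℝ)+1)^(δ'+1))
          + 2^|δ| * ((n:ℝ)+1)^δ * (K2 * 2^(γ'+1) * ((n:ℝ)+1)^(γ'+1)) := by
      calc ∑ p ∈ Finset.range (n+1), ((m:ℝ)-(p:ℝ)+1)^γ * ((p:ℝ)+1)^δ
          ≤ ∑ p ∈ Finset.range (n+1),
              (2^|γ| * ((m:ℝ)+1)^γ * ((p:ℝ)+1)^δ'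
                + 2^|δ| * ((n:ℝ)+1)^δ * ((m:ℝ)-(p:ℝ)+1)^γ) :=
            Finset.sum_le_sum tb
        _ = 2^|γ| * ((m:ℝ)+1)^γ * ∑ p ∈ Finset.range (n+1), ((p:ℝ)+1)^δ'
            + 2^|δ| * ((n:ℝ)+1)^δ * ∑ p ∈ Finset.range (n+1), ((m:ℝ)-(p:ℝ)+1)^γ := by
            rw [Finset.sum_add_distrib, Finset.mul_sum, Finset.mul_sum]
        _ ≤ _ := by
            apply add_le_add
            · exact mul_le_mul_of_nonneg_left (hS1 n) (by positivity)
            · exact mul_le_mul_of_nonneg_left hsumγ (by positivity)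
    have hsecond :
        ((m:ℝ)+1)^α * ((n:ℝ)+1)^β *
            (2^|δ| * ((n:ℝ)+1)^δ * (K2 * 2^(γ'+1) * ((n:ℝ)+1)^(γ'+1)))
          ≤ 2^|δ| *K2*2^(γ'+1)*2^|α+ω| * (((m:ℝ)+1)^(-ω) * ((n:ℝ)+1)^(-ω)) := by
      have heq : ((m:ℝ)+1)^α * ((n:ℝ)+1)^β *
            (2^|δ| * ((n:ℝ)+1)^δ * (K2 * 2^(γ'+1) * ((n:ℝ)+1)^(γ'+1)))
          = 2^|δ| *K2*2^(γ'+1) * (((m:ℝ)+1)^α * ((n:ℝ)+1)^(β+(δ+(γ'+1)))) := by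
        rw [Real.rpow_add hy0 β (δ+(γ'+1)), Real.rpow_add hy0 δ (γ'+1)]; ring
      rw [heq]
      have hcmp := compare_le' (a := α) (b := β+(δ+(γ'+1))) (ω := ω) hy1 hyx hx2y
        (by rw [show α+(β+(δ+(γ'+1))) = α+(β+δ+γ'+1) from by ring]; exact hωc)
      calc 2^|δ| *K2*2^(γ'+1) * (((m:ℝ)+1)^α * ((n:ℝ)+1)^(β+(δ+(γ'+1))))
          ≤ 2^|δ| *K2*2^(γ'+1) * (2^|α+ω| * (((m:ℝ)+1)^(-ω) * ((n:ℝ)+1)^(-ω))) :=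
            mul_le_mul_of_nonneg_left hcmp hc3.le
        _ = 2^|δ| *K2*2^(γ'+1)*2^|α+ω| * (((m:ℝ)+1)^(-ω) * ((n:ℝ)+1)^(-ω)) := by ring
    calc ((m:ℝ)+1)^α * ((n:ℝ)+1)^β *
          ∑ p ∈ Finset.range (n+1), ((m:ℝ)-(p:ℝ)+1)^γ * ((p:ℝ)+1)^δ
        ≤ ((m:ℝ)+1)^α * ((n:ℝ)+1)^β *
            (2^|γ| * ((m:ℝ)+1)^γ * (K1 * ((n:ℝ)+1)^(δ'+1))
              + 2^|δ| * ((n:ℝ)+1)^δ * (K2 * 2^(γ'+1) * ((n:ℝ)+1)^(γ'+1))) :=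
          mul_le_mul_of_nonneg_left hsum hpref
      _ = ((m:ℝ)+1)^α * ((n:ℝ)+1)^β * (2^|γ| * ((m:ℝ)+1)^γ * (K1 * ((n:ℝ)+1)^(δ'+1)))
          + ((m:ℝ)+1)^α * ((n:ℝ)+1)^β *
              (2^|δ| * ((n:ℝ)+1)^δ * (K2 * 2^(γ'+1) * ((n:ℝ)+1)^(γ'+1))) := by ring
      _ ≤ 2^|γ| *K1 * (((m:ℝ)+1)^(-ω) * ((n:ℝ)+1)^(-ω))
          + 2^|δ| *K2*2^(γ'+1)*2^|α+ω| * (((m:ℝ)+1)^(-ω) * ((n:ℝ)+1)^(-ω)) :=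
          add_le_add hfirst hsecond
      _ = (2^|γ| *K1 + 2^|δ| *K2*2^(γ'+1)*2^|α+ω|) * ((m:ℝ)+1)^(-ω) * ((n:ℝ)+1)^(-ω) := by
          ring
end

section
/- Let α, β, γ, δ be real numbers with α+β < 0, α+γ < 0, β+δ < 0, α+β+γ+1 < 0, α+β+δ+1 < 0, and α+β+γ+δ+1 < 0. Then there exist ω > 0 and C > 0 such that for all naturals m, n: (m+1)^α (n+1)^β Σ_{p=0}^{min(m,n)} (m-p+1)^γ (n-p+1)^δ ≤ C (m+1)^{-ω} (n+1)^{-ω}. -/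
private lemma auxMN (M N e f : ℝ) (hM : 1 ≤ M) (hMN : M ≤ N) (hf : f ≤ 0)
    (hef : e + f ≤ 0) : M ^ e * N ^ f ≤ 1 := by
  have hN : 1 ≤ N := hM.trans hMN
  rcases le_or_gt e 0 with he | he
  · calc M ^ e * N ^ f ≤ 1 * 1 := by
          apply mul_le_mul (Real.rpow_le_one_of_one_le_of_nonpos hM he)
            (Real.rpow_le_one_of_one_le_of_nonpos hN hf)
            (Real.rpow_nonneg (by linarith) _) zero_le_one
      _ = 1 := by norm_num
  · calc M ^ e * N ^ f ≤ N ^ e * N ^ f := by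
          apply mul_le_mul_of_nonneg_right
            (Real.rpow_le_rpow (by linarith) hMN he.le)
            (Real.rpow_nonneg (by linarith) _)
      _ = N ^ (e + f) := (Real.rpow_add (by linarith) _ _).symm
      _ ≤ 1 := Real.rpow_le_one_of_one_le_of_nonpos hN hef

private lemma core2 (a M g e : ℝ) (ha : 1 ≤ a) (haM : a ≤ M) (he : e ≤ 0)
    (hge : g + e ≤ 0) : a ^ g * M ^ e ≤ 1 := by
  have hM : 1 ≤ M := ha.trans haM
  rcases le_or_gt 0 g with hg | hg
  · calc a ^ g * M ^ e ≤ M ^ g * M ^ e := by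
          apply mul_le_mul_of_nonneg_right
            (Real.rpow_le_rpow (by linarith) haM hg)
            (Real.rpow_nonneg (by linarith) _)
      _ = M ^ (g + e) := (Real.rpow_add (by linarith) _ _).symm
      _ ≤ 1 := Real.rpow_le_one_of_one_le_of_nonpos hM hge
  · calc a ^ g * M ^ e ≤ 1 * 1 := by
          apply mul_le_mul (Real.rpow_le_one_of_one_le_of_nonpos ha hg.le)
            (Real.rpow_le_one_of_one_le_of_nonpos hM he)
            (Real.rpow_nonneg (by linarith) _) zero_le_one
      _ = 1 := by norm_num

private lemma core3 (a M N g e f : ℝ) (ha : 1 ≤ a) (haM : a ≤ M) (hMN : M ≤ N)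
    (hf : f ≤ 0) (hef : e + f ≤ 0) (hgef : g + e + f ≤ 0) :
    a ^ g * M ^ e * N ^ f ≤ 1 := by
  have hM : 1 ≤ M := ha.trans haM
  rcases le_or_gt 0 g with hg | hg
  · calc a ^ g * M ^ e * N ^ f ≤ M ^ g * M ^ e * N ^ f := by
          apply mul_le_mul_of_nonneg_right
            (mul_le_mul_of_nonneg_right (Real.rpow_le_rpow (by linarith) haM hg)
              (Real.rpow_nonneg (by linarith) _))
            (Real.rpow_nonneg (by linarith) _)
      _ = M ^ (g + e) * N ^ f := by
          rw [← Real.rpow_add (by linarith : (0:ℝ) < M)]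
      _ ≤ 1 := auxMN M N (g + e) f hM hMN hf (by linarith)
  · calc a ^ g * M ^ e * N ^ f ≤ 1 * (M ^ e * N ^ f) := by
          rw [mul_assoc]
          apply mul_le_mul_of_nonneg_right
            (Real.rpow_le_one_of_one_le_of_nonpos ha hg.le)
          exact mul_nonneg (Real.rpow_nonneg (by linarith) _)
            (Real.rpow_nonneg (by linarith) _)
      _ = M ^ e * N ^ f := one_mul _
      _ ≤ 1 := auxMN M N e f hM hMN hf hef

private lemma ptbound (α β γ δ ω a b M N : ℝ) (hω : 0 < ω) (hω1 : ω ≤ 1)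
    (A1 : α + β + 2*ω ≤ 0) (A3 : β + δ + ω ≤ 0) (A4 : α + β + γ + 1 + 3*ω ≤ 0)
    (A5 : α + β + δ + 2*ω ≤ 0) (A6 : α + β + γ + δ + 1 + 3*ω ≤ 0)
    (ha : 1 ≤ a) (hb : 1 ≤ b) (hM : 1 ≤ M) (haM : a ≤ M) (hMN : M ≤ N)
    (hbN : b ≤ N) (hNMb : N ≤ M + b) :
    a ^ (γ+1+ω) * b ^ δ * M ^ (α+ω) * N ^ (β+ω) ≤ 2 ^ (|β|+1) := by
  have hN : 1 ≤ N := hM.trans hMN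
  have ha0 : (0:ℝ) < a := lt_of_lt_of_le one_pos ha
  have hb0 : (0:ℝ) < b := lt_of_lt_of_le one_pos hb
  have hM0 : (0:ℝ) < M := lt_of_lt_of_le one_pos hM
  have hN0 : (0:ℝ) < N := lt_of_lt_of_le one_pos hN
  have hC1 : (1:ℝ) ≤ 2 ^ (|β|+1) :=
    Real.one_le_rpow one_le_two (by positivity)
  rcases le_or_gt (β + ω) 0 with hβ | hβ
  · rcases le_or_gt δ 0 with hδ | hδ
    · calc a ^ (γ+1+ω) * b ^ δ * M ^ (α+ω) * N ^ (β+ω)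
          = (a ^ (γ+1+ω) * M ^ (α+ω) * N ^ (β+ω)) * b ^ δ := by ring
        _ ≤ (a ^ (γ+1+ω) * M ^ (α+ω) * N ^ (β+ω)) * 1 := by
            apply mul_le_mul_of_nonneg_left
              (Real.rpow_le_one_of_one_le_of_nonpos hb hδ) (by positivity)
        _ = a ^ (γ+1+ω) * M ^ (α+ω) * N ^ (β+ω) := mul_one _
        _ ≤ 1 := core3 a M N (γ+1+ω) (α+ω) (β+ω) ha haM hMN hβ
              (by linarith) (by linarith)
        _ ≤ 2 ^ (|β|+1) := hC1
    · calc a ^ (γ+1+ω) * b ^ δ * M ^ (α+ω) * N ^ (β+ω)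
          = (a ^ (γ+1+ω) * M ^ (α+ω) * N ^ (β+ω)) * b ^ δ := by ring
        _ ≤ (a ^ (γ+1+ω) * M ^ (α+ω) * N ^ (β+ω)) * N ^ δ := by
            apply mul_le_mul_of_nonneg_left
              (Real.rpow_le_rpow (by linarith) hbN hδ.le) (by positivity)
        _ = a ^ (γ+1+ω) * M ^ (α+ω) * (N ^ (β+ω) * N ^ δ) := by ring
        _ = a ^ (γ+1+ω) * M ^ (α+ω) * N ^ (β+ω+δ) := by
            rw [← Real.rpow_add hN0]
        _ ≤ 1 := core3 a M N (γ+1+ω) (α+ω) (β+ω+δ) ha haM hMN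
              (by linarith) (by linarith) (by linarith)
        _ ≤ 2 ^ (|β|+1) := hC1
  · have h2Mb : N ≤ 2 * (M * b) := by nlinarith
    calc a ^ (γ+1+ω) * b ^ δ * M ^ (α+ω) * N ^ (β+ω)
        = (a ^ (γ+1+ω) * b ^ δ * M ^ (α+ω)) * N ^ (β+ω) := by ring
      _ ≤ (a ^ (γ+1+ω) * b ^ δ * M ^ (α+ω)) * (2 * (M * b)) ^ (β+ω) := by
          apply mul_le_mul_of_nonneg_left
            (Real.rpow_le_rpow (by linarith) h2Mb hβ.le) (by positivity)
      _ = (a ^ (γ+1+ω) * b ^ δ * M ^ (α+ω)) *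
            ((2:ℝ) ^ (β+ω) * (M ^ (β+ω) * b ^ (β+ω))) := by
          rw [Real.mul_rpow (by norm_num) (by positivity),
            Real.mul_rpow (by linarith) (by linarith)]
      _ = (2:ℝ) ^ (β+ω) *
            (a ^ (γ+1+ω) * (M ^ (α+ω) * M ^ (β+ω)) * (b ^ δ * b ^ (β+ω))) := by
          ring
      _ = (2:ℝ) ^ (β+ω) *
            (a ^ (γ+1+ω) * M ^ (α+ω+(β+ω)) * b ^ (δ+(β+ω))) := by
          rw [← Real.rpow_add hM0, ← Real.rpow_add hb0]
      _ ≤ (2:ℝ) ^ (β+ω) * 1 := by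
          apply mul_le_mul_of_nonneg_left _ (by positivity)
          calc a ^ (γ+1+ω) * M ^ (α+ω+(β+ω)) * b ^ (δ+(β+ω))
              ≤ (a ^ (γ+1+ω) * M ^ (α+ω+(β+ω))) * 1 := by
                apply mul_le_mul_of_nonneg_left
                  (Real.rpow_le_one_of_one_le_of_nonpos hb (by linarith))
                  (by positivity)
            _ = a ^ (γ+1+ω) * M ^ (α+ω+(β+ω)) := mul_one _
            _ ≤ 1 := core2 a M (γ+1+ω) (α+ω+(β+ω)) ha haM
                  (by linarith) (by linarith)
      _ = (2:ℝ) ^ (β+ω) := mul_one _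
      _ ≤ 2 ^ (|β|+1) := by
          apply Real.rpow_le_rpow_of_exponent_le one_le_two
          have := le_abs_self β
          linarith

private lemma keylem (α β γ δ ω : ℝ) (hω : 0 < ω) (hω1 : ω ≤ 1)
    (A1 : α + β + 2*ω ≤ 0) (A3 : β + δ + ω ≤ 0) (A4 : α + β + γ + 1 + 3*ω ≤ 0)
    (A5 : α + β + δ + 2*ω ≤ 0) (A6 : α + β + γ + δ + 1 + 3*ω ≤ 0) :
    ∃ C > (0:ℝ), ∀ m n : ℕ, m ≤ n →
      ((m : ℝ) + 1) ^ α * ((n : ℝ) + 1) ^ β *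
          ∑ p ∈ Finset.range (m + 1),
            ((m : ℝ) - (p : ℝ) + 1) ^ γ * ((n : ℝ) - (p : ℝ) + 1) ^ δ
        ≤ C * ((m : ℝ) + 1) ^ (-ω) * ((n : ℝ) + 1) ^ (-ω) := by
  have hsum : Summable (fun j : ℕ => ((j:ℝ)+1) ^ (-(1+ω))) := by
    have h0 : Summable (fun k : ℕ => (((k:ℝ)) ^ (1+ω))⁻¹) :=
      Real.summable_nat_rpow_inv.2 (by linarith)
    have h1 : Summable (fun k : ℕ => ((((k+1:ℕ)):ℝ) ^ (1+ω))⁻¹) :=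
      (summable_nat_add_iff 1).2 h0
    refine h1.congr fun j => ?_
    push_cast
    rw [← Real.rpow_neg (by positivity)]
  set Z : ℝ := ∑' j : ℕ, ((j:ℝ)+1) ^ (-(1+ω)) with hZdef
  have hZ0 : 0 ≤ Z :=
    tsum_nonneg fun j => Real.rpow_nonneg (by positivity) _
  refine ⟨(2:ℝ) ^ (|β|+1) * (Z + 1), by positivity, ?_⟩
  intro m n hmn
  have hm0 : (0:ℝ) ≤ (m:ℝ) := Nat.cast_nonneg m
  have hn0 : (0:ℝ) ≤ (n:ℝ) := Nat.cast_nonneg n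
  have hM1 : (1:ℝ) ≤ (m:ℝ) + 1 := by linarith
  have hN1 : (1:ℝ) ≤ (n:ℝ) + 1 := by linarith
  have hmn' : (m:ℝ) ≤ n := Nat.cast_le.2 hmn
  have hMN : (m:ℝ) + 1 ≤ (n:ℝ) + 1 := by linarith
  have hM0 : (0:ℝ) < (m:ℝ) + 1 := by linarith
  have hN0 : (0:ℝ) < (n:ℝ) + 1 := by linarith
  have hterm : ∀ p ∈ Finset.range (m+1),
      ((m : ℝ) - (p : ℝ) + 1) ^ γ * ((n : ℝ) - (p : ℝ) + 1) ^ δ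
        ≤ ((2:ℝ) ^ (|β|+1) * (((m:ℝ)+1) ^ (-(α+ω)) * ((n:ℝ)+1) ^ (-(β+ω)))) *
            ((m : ℝ) - (p : ℝ) + 1) ^ (-(1+ω)) := by
    intro p hp
    have hpm : p ≤ m := Nat.lt_succ_iff.1 (Finset.mem_range.1 hp)
    have hpm' : (p:ℝ) ≤ m := Nat.cast_le.2 hpm
    have hpn' : (p:ℝ) ≤ n := le_trans hpm' hmn'
    have hp0 : (0:ℝ) ≤ (p:ℝ) := Nat.cast_nonneg p
    have ha1 : (1:ℝ) ≤ (m:ℝ) - p + 1 := by linarith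
    have hb1 : (1:ℝ) ≤ (n:ℝ) - p + 1 := by linarith
    have haM : (m:ℝ) - p + 1 ≤ (m:ℝ) + 1 := by linarith
    have hbN : (n:ℝ) - p + 1 ≤ (n:ℝ) + 1 := by linarith
    have hNMb : (n:ℝ) + 1 ≤ ((m:ℝ) + 1) + ((n:ℝ) - p + 1) := by linarith
    have hE := ptbound α β γ δ ω ((m:ℝ) - p + 1) ((n:ℝ) - p + 1)
      ((m:ℝ)+1) ((n:ℝ)+1) hω hω1 A1 A3 A4 A5 A6 ha1 hb1 hM1 haM hMN hbN hNMb
    have ha0 : (0:ℝ) < (m:ℝ) - p + 1 := by linarith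
    have e1 : ((m:ℝ) - p + 1) ^ (γ+1+ω) * ((m:ℝ) - p + 1) ^ (-(1+ω))
        = ((m:ℝ) - p + 1) ^ γ := by
      rw [← Real.rpow_add ha0]; congr 1; ring
    have e2 : ((m:ℝ)+1) ^ (α+ω) * ((m:ℝ)+1) ^ (-(α+ω)) = 1 := by
      rw [← Real.rpow_add hM0, show α + ω + -(α+ω) = (0:ℝ) by ring, Real.rpow_zero]
    have e3 : ((n:ℝ)+1) ^ (β+ω) * ((n:ℝ)+1) ^ (-(β+ω)) = 1 := by
      rw [← Real.rpow_add hN0, show β + ω + -(β+ω) = (0:ℝ) by ring, Real.rpow_zero]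
    calc ((m : ℝ) - (p:ℝ) + 1) ^ γ * ((n : ℝ) - (p:ℝ) + 1) ^ δ
        = (((m:ℝ) - p + 1) ^ (γ+1+ω) * ((n:ℝ) - p + 1) ^ δ *
            ((m:ℝ)+1) ^ (α+ω) * ((n:ℝ)+1) ^ (β+ω)) *
            (((m:ℝ) - p + 1) ^ (-(1+ω)) *
              (((m:ℝ)+1) ^ (-(α+ω)) * ((n:ℝ)+1) ^ (-(β+ω)))) := by
          rw [show (((m:ℝ) - p + 1) ^ (γ+1+ω) * ((n:ℝ) - p + 1) ^ δ *
              ((m:ℝ)+1) ^ (α+ω) * ((n:ℝ)+1) ^ (β+ω)) *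
              (((m:ℝ) - p + 1) ^ (-(1+ω)) *
                (((m:ℝ)+1) ^ (-(α+ω)) * ((n:ℝ)+1) ^ (-(β+ω))))
              = (((m:ℝ) - p + 1) ^ (γ+1+ω) * ((m:ℝ) - p + 1) ^ (-(1+ω))) *
                ((n:ℝ) - p + 1) ^ δ *
                (((m:ℝ)+1) ^ (α+ω) * ((m:ℝ)+1) ^ (-(α+ω))) *
                (((n:ℝ)+1) ^ (β+ω) * ((n:ℝ)+1) ^ (-(β+ω))) from by ring,
            e1, e2, e3]
          ring
      _ ≤ (2:ℝ) ^ (|β|+1) *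
            (((m:ℝ) - p + 1) ^ (-(1+ω)) *
              (((m:ℝ)+1) ^ (-(α+ω)) * ((n:ℝ)+1) ^ (-(β+ω)))) := by
          apply mul_le_mul_of_nonneg_right hE (by positivity)
      _ = ((2:ℝ) ^ (|β|+1) * (((m:ℝ)+1) ^ (-(α+ω)) * ((n:ℝ)+1) ^ (-(β+ω)))) *
            ((m : ℝ) - (p : ℝ) + 1) ^ (-(1+ω)) := by ring
  have hS : ∑ p ∈ Finset.range (m+1),
      ((m : ℝ) - (p : ℝ) + 1) ^ γ * ((n : ℝ) - (p : ℝ) + 1) ^ δ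
      ≤ ((2:ℝ) ^ (|β|+1) * (((m:ℝ)+1) ^ (-(α+ω)) * ((n:ℝ)+1) ^ (-(β+ω)))) *
          ∑ p ∈ Finset.range (m+1), ((m : ℝ) - (p : ℝ) + 1) ^ (-(1+ω)) := by
    rw [Finset.mul_sum]
    exact Finset.sum_le_sum hterm
  have hS2 : ∑ p ∈ Finset.range (m+1), ((m : ℝ) - (p : ℝ) + 1) ^ (-(1+ω)) ≤ Z := by
    have hcongr : ∑ p ∈ Finset.range (m+1), ((m : ℝ) - (p : ℝ) + 1) ^ (-(1+ω))
        = ∑ p ∈ Finset.range (m+1), (fun j : ℕ => ((j:ℝ)+1) ^ (-(1+ω))) (m - p) := by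
      refine Finset.sum_congr rfl fun p hp => ?_
      have hpm : p ≤ m := Nat.lt_succ_iff.1 (Finset.mem_range.1 hp)
      simp only [Nat.cast_sub hpm]
    rw [hcongr]
    have hrefl := Finset.sum_range_reflect (fun j : ℕ => ((j:ℝ)+1) ^ (-(1+ω))) (m+1)
    simp only [Nat.add_sub_cancel] at hrefl
    rw [hrefl]
    exact Summable.sum_le_tsum _ (fun j _ => Real.rpow_nonneg (by positivity) _) hsum
  have r1 : ((m:ℝ)+1) ^ α * ((m:ℝ)+1) ^ (-(α+ω)) = ((m:ℝ)+1) ^ (-ω) := by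
    rw [← Real.rpow_add hM0]; congr 1; ring
  have r2 : ((n:ℝ)+1) ^ β * ((n:ℝ)+1) ^ (-(β+ω)) = ((n:ℝ)+1) ^ (-ω) := by
    rw [← Real.rpow_add hN0]; congr 1; ring
  calc ((m : ℝ) + 1) ^ α * ((n : ℝ) + 1) ^ β *
        ∑ p ∈ Finset.range (m + 1),
          ((m : ℝ) - (p : ℝ) + 1) ^ γ * ((n : ℝ) - (p : ℝ) + 1) ^ δ
      ≤ ((m : ℝ) + 1) ^ α * ((n : ℝ) + 1) ^ β *
          (((2:ℝ) ^ (|β|+1) * (((m:ℝ)+1) ^ (-(α+ω)) * ((n:ℝ)+1) ^ (-(β+ω)))) * Z) := by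
        apply mul_le_mul_of_nonneg_left _ (by positivity)
        exact hS.trans (mul_le_mul_of_nonneg_left hS2 (by positivity))
    _ = ((2:ℝ) ^ (|β|+1) * Z) *
          (((m:ℝ)+1) ^ α * ((m:ℝ)+1) ^ (-(α+ω))) *
          (((n:ℝ)+1) ^ β * ((n:ℝ)+1) ^ (-(β+ω))) := by ring
    _ = ((2:ℝ) ^ (|β|+1) * Z) * ((m:ℝ)+1) ^ (-ω) * ((n:ℝ)+1) ^ (-ω) := by
        rw [r1, r2]
    _ ≤ ((2:ℝ) ^ (|β|+1) * (Z+1)) * ((m:ℝ)+1) ^ (-ω) * ((n:ℝ)+1) ^ (-ω) := by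
        apply mul_le_mul_of_nonneg_right _ (Real.rpow_nonneg (by positivity) _)
        apply mul_le_mul_of_nonneg_right _ (Real.rpow_nonneg (by positivity) _)
        have h2 : (0:ℝ) ≤ (2:ℝ) ^ (|β|+1) := Real.rpow_nonneg (by norm_num) _
        nlinarith

theorem symmetric_sum_power_estimate (α β γ δ : ℝ)
    (h1 : α + β < 0) (h2 : α + γ < 0) (h3 : β + δ < 0)
    (h4 : α + β + γ + 1 < 0) (h5 : α + β + δ + 1 < 0) (h6 : α + β + γ + δ + 1 < 0) :
    ∃ ω > (0 : ℝ), ∃ C > (0 : ℝ), ∀ m n : ℕ,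
      ((m : ℝ) + 1) ^ α * ((n : ℝ) + 1) ^ β *
          ∑ p ∈ Finset.range (min m n + 1),
            ((m : ℝ) - (p : ℝ) + 1) ^ γ * ((n : ℝ) - (p : ℝ) + 1) ^ δ
        ≤ C * ((m : ℝ) + 1) ^ (-ω) * ((n : ℝ) + 1) ^ (-ω) := by
  set L : ℝ := min (-(α+β)) (min (-(α+γ)) (min (-(β+δ))
    (min (-(α+β+γ+1)) (min (-(α+β+δ+1)) (-(α+β+γ+δ+1)))))) with hLdef
  have hL0 : 0 < L := by
    simp only [hLdef, lt_min_iff]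
    refine ⟨by linarith, by linarith, by linarith, by linarith, by linarith, by linarith⟩
  set ω : ℝ := min 1 (L/3) with hωdef
  have hω : 0 < ω := lt_min one_pos (by linarith)
  have hω1 : ω ≤ 1 := min_le_left _ _
  have hωL : ω ≤ L/3 := min_le_right _ _
  have c1 : L ≤ -(α+β) := min_le_left _ _
  have c2 : L ≤ -(α+γ) := le_trans (min_le_right _ _) (min_le_left _ _)
  have c3 : L ≤ -(β+δ) :=
    le_trans (min_le_right _ _) (le_trans (min_le_right _ _) (min_le_left _ _))
  have c4 : L ≤ -(α+β+γ+1) :=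
    le_trans (min_le_right _ _) (le_trans (min_le_right _ _)
      (le_trans (min_le_right _ _) (min_le_left _ _)))
  have c5 : L ≤ -(α+β+δ+1) :=
    le_trans (min_le_right _ _) (le_trans (min_le_right _ _)
      (le_trans (min_le_right _ _) (le_trans (min_le_right _ _) (min_le_left _ _))))
  have c6 : L ≤ -(α+β+γ+δ+1) :=
    le_trans (min_le_right _ _) (le_trans (min_le_right _ _)
      (le_trans (min_le_right _ _) (le_trans (min_le_right _ _) (min_le_right _ _))))
  obtain ⟨Ca, hCa, hka⟩ := keylem α β γ δ ω hω hω1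
    (by linarith) (by linarith) (by linarith) (by linarith) (by linarith)
  obtain ⟨Cb, hCb, hkb⟩ := keylem β α δ γ ω hω hω1
    (by linarith) (by linarith) (by linarith) (by linarith) (by linarith)
  refine ⟨ω, hω, Ca + Cb, by linarith, ?_⟩
  intro m n
  have hm0 : (0:ℝ) ≤ (m:ℝ) := Nat.cast_nonneg m
  have hn0 : (0:ℝ) ≤ (n:ℝ) := Nat.cast_nonneg n
  have hMpow : (0:ℝ) ≤ ((m:ℝ)+1) ^ (-ω) := Real.rpow_nonneg (by linarith) _
  have hNpow : (0:ℝ) ≤ ((n:ℝ)+1) ^ (-ω) := Real.rpow_nonneg (by linarith) _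
  rcases le_total m n with h | h
  · rw [min_eq_left h]
    calc ((m : ℝ) + 1) ^ α * ((n : ℝ) + 1) ^ β *
          ∑ p ∈ Finset.range (m + 1),
            ((m : ℝ) - (p : ℝ) + 1) ^ γ * ((n : ℝ) - (p : ℝ) + 1) ^ δ
        ≤ Ca * ((m:ℝ)+1) ^ (-ω) * ((n:ℝ)+1) ^ (-ω) := hka m n h
      _ ≤ (Ca + Cb) * ((m:ℝ)+1) ^ (-ω) * ((n:ℝ)+1) ^ (-ω) := by
          apply mul_le_mul_of_nonneg_right _ hNpow
          apply mul_le_mul_of_nonneg_right _ hMpow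
          linarith
  · rw [min_eq_right h]
    have hsum_comm : ∑ p ∈ Finset.range (n + 1),
          ((m : ℝ) - (p : ℝ) + 1) ^ γ * ((n : ℝ) - (p : ℝ) + 1) ^ δ
        = ∑ p ∈ Finset.range (n + 1),
          ((n : ℝ) - (p : ℝ) + 1) ^ δ * ((m : ℝ) - (p : ℝ) + 1) ^ γ :=
      Finset.sum_congr rfl fun p _ => mul_comm _ _
    calc ((m : ℝ) + 1) ^ α * ((n : ℝ) + 1) ^ β *
          ∑ p ∈ Finset.range (n + 1),
            ((m : ℝ) - (p : ℝ) + 1) ^ γ * ((n : ℝ) - (p : ℝ) + 1) ^ δ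
        = ((n : ℝ) + 1) ^ β * ((m : ℝ) + 1) ^ α *
          ∑ p ∈ Finset.range (n + 1),
            ((n : ℝ) - (p : ℝ) + 1) ^ δ * ((m : ℝ) - (p : ℝ) + 1) ^ γ := by
          rw [hsum_comm]; ring
      _ ≤ Cb * ((n:ℝ)+1) ^ (-ω) * ((m:ℝ)+1) ^ (-ω) := hkb n m h
      _ = Cb * ((m:ℝ)+1) ^ (-ω) * ((n:ℝ)+1) ^ (-ω) := by ring
      _ ≤ (Ca + Cb) * ((m:ℝ)+1) ^ (-ω) * ((n:ℝ)+1) ^ (-ω) := by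
          apply mul_le_mul_of_nonneg_right _ hNpow
          apply mul_le_mul_of_nonneg_right _ hMpow
          linarith
end

section
/- Let σ > -1/2, s > 0, and for naturals m ≤ n define c'(m,n) = (-1)^{n-m} s^{1/2} √(n! Γ(m+1/2+σ)/(m! Γ(n+3/2+σ))). Then there exist ω > 0 and C > 0 (depending on σ) such that |c'(m,n)| ≤ C s^{1/2} (m+1)^{-ω} (n+1)^{-ω} for all m ≤ n. -/
open Finset

lemma step_ineq {b x : ℝ} (hb : 0 < b) (hx : 0 < x) :
    x * (x + 1 + b) ^ b ≤ (x + b) ^ (1 + b) := by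
  have h1b : (0:ℝ) < 1 + b := by linarith
  have key := Real.geom_mean_le_arith_mean2_weighted
    (by positivity : (0:ℝ) ≤ 1/(1+b)) (by positivity : (0:ℝ) ≤ b/(1+b))
    hx.le (by linarith : (0:ℝ) ≤ x + 1 + b)
    (by field_simp)
  have hsum : 1/(1+b) * x + b/(1+b) * (x+1+b) = x + b := by field_simp; ring
  rw [hsum] at key
  have h2 := Real.rpow_le_rpow (by positivity) key h1b.le
  rw [Real.mul_rpow (by positivity) (by positivity), ← Real.rpow_mul hx.le, ← Real.rpow_mul (by linarith : (0:ℝ) ≤ x + 1 + b)] at h2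
  have e1 : 1/(1+b) * (1+b) = 1 := by field_simp
  have e2 : b/(1+b) * (1+b) = b := by field_simp
  rw [e1, e2, Real.rpow_one] at h2
  exact h2

lemma prod_bound {a b : ℝ} (ha : 0 < a) (hb : 0 < b) (hba : b ≤ a) (m : ℕ) :
    ∀ n : ℕ, m ≤ n → ∏ k ∈ Finset.Ioc m n, ((k:ℝ)/(k+a)) ≤ ((m+1+b)/(n+1+b)) ^ b := by
  intro n
  induction n with
  | zero =>
    intro h
    interval_cases m
    simp only [Finset.Ioc_self, Finset.prod_empty, Nat.cast_zero, zero_add]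
    rw [div_self (by positivity), Real.one_rpow]
  | succ n IH =>
    intro hmn
    rcases Nat.lt_or_ge m (n+1) with h | h
    · have hmn' : m ≤ n := by omega
      rw [prod_Ioc_succ_top hmn']
      have hx : (0:ℝ) < (n:ℝ) + 1 := by positivity
      have hd1 : (0:ℝ) < (n:ℝ) + 1 + b := by linarith
      have hd2 : (0:ℝ) < (n:ℝ) + 1 + a := by linarith
      have hM : (0:ℝ) < (m:ℝ) + 1 + b := by positivity
      have step1 : ((n:ℝ)+1)/((n:ℝ)+1+a) ≤ ((n:ℝ)+1)/((n:ℝ)+1+b) := by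
        apply div_le_div_of_nonneg_left (by positivity) hd1 (by linarith)
      have step2 : ((m+1+b)/((n:ℝ)+1+b)) ^ b * (((n:ℝ)+1)/((n:ℝ)+1+b))
          ≤ ((m+1+b)/(((n:ℝ)+1)+1+b)) ^ b := by
        rw [Real.div_rpow hM.le hd1.le, Real.div_rpow hM.le (by linarith : (0:ℝ) ≤ (n:ℝ)+1+1+b)]
        rw [div_mul_div_comm]
        rw [div_le_div_iff₀ (by positivity) (by positivity)]
        have key := step_ineq hb hx
        have expand : ((n:ℝ)+1+b) ^ b * ((n:ℝ)+1+b) = ((n:ℝ)+1+b) ^ (1+b) := by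
          rw [Real.rpow_add hd1, Real.rpow_one]; ring
        calc ((m:ℝ)+1+b) ^ b * ((n:ℝ)+1) * ((n:ℝ)+1+1+b) ^ b
            = ((m:ℝ)+1+b) ^ b * (((n:ℝ)+1) * ((n:ℝ)+1+1+b) ^ b) := by ring
          _ ≤ ((m:ℝ)+1+b) ^ b * ((n:ℝ)+1+b) ^ (1+b) := by
              apply mul_le_mul_of_nonneg_left _ (by positivity)
              have : (n:ℝ) + 1 + 1 + b = ((n:ℝ)+1) + 1 + b := by ring
              rw [this]; exact key
          _ = ((m:ℝ)+1+b) ^ b * (((n:ℝ)+1+b) ^ b * ((n:ℝ)+1+b)) := by rw [expand]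
      calc (∏ k ∈ Finset.Ioc m n, ((k:ℝ)/(k+a))) * (((n+1:ℕ):ℝ)/((n+1:ℕ)+a))
          ≤ ((m+1+b)/((n:ℝ)+1+b)) ^ b * (((n:ℝ)+1)/((n:ℝ)+1+b)) := by
            push_cast
            apply mul_le_mul (IH hmn') step1 (by positivity) (by positivity)
        _ ≤ ((m+1+b)/(((n:ℝ)+1)+1+b)) ^ b := step2
        _ = ((m+1+b)/(((n+1:ℕ):ℝ)+1+b)) ^ b := by push_cast; ring_nf
    · have : m = n + 1 := by omega
      subst this
      simp only [Finset.Ioc_self, Finset.prod_empty]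
      push_cast
      rw [div_self (by positivity), Real.one_rpow]

lemma gamma_formula {a : ℝ} (ha : 0 < a) (m : ℕ) :
    ∀ n : ℕ, m ≤ n →
      (n.factorial : ℝ) * Real.Gamma ((m:ℝ) + a) / ((m.factorial : ℝ) * Real.Gamma ((n:ℝ) + 1 + a))
        = (1/((m:ℝ)+a)) * ∏ k ∈ Finset.Ioc m n, ((k:ℝ)/(k+a)) := by
  have hGpos : ∀ k : ℕ, 0 < Real.Gamma ((k:ℝ) + a) := fun k =>
    Real.Gamma_pos_of_pos (by positivity)
  have base : ∀ j : ℕ, (j.factorial : ℝ) * Real.Gamma ((j:ℝ) + a) /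
      ((j.factorial : ℝ) * Real.Gamma ((j:ℝ) + 1 + a)) = 1/((j:ℝ)+a) := by
    intro j
    have hG : Real.Gamma ((j:ℝ) + 1 + a) = ((j:ℝ)+a) * Real.Gamma ((j:ℝ)+a) := by
      rw [show ((j:ℝ)+1+a) = ((j:ℝ)+a)+1 by ring, Real.Gamma_add_one (by positivity)]
    rw [hG]
    have h1 : (Real.Gamma ((j:ℝ)+a)) ≠ 0 := (hGpos j).ne'
    have h2 : ((j.factorial : ℕ) : ℝ) ≠ 0 := by positivity
    have h3 : ((j:ℝ)+a) ≠ 0 := by positivity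
    field_simp
  intro n
  induction n with
  | zero =>
    intro h
    interval_cases m
    rw [Finset.Ioc_self, Finset.prod_empty, mul_one]
    exact base 0
  | succ n IH =>
    intro hmn
    rcases Nat.lt_or_ge m (n+1) with h | h
    · have hmn' : m ≤ n := by omega
      rw [prod_Ioc_succ_top hmn', ← mul_assoc, ← IH hmn']
      have hfact : ((n+1:ℕ).factorial : ℝ) = ((n:ℝ)+1) * (n.factorial : ℝ) := by
        push_cast [Nat.factorial_succ]; ring
      have hG : Real.Gamma (((n+1:ℕ):ℝ) + 1 + a) = ((n:ℝ)+1+a) * Real.Gamma ((n:ℝ)+1+a) := by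
        rw [show (((n+1:ℕ):ℝ) + 1 + a) = ((n:ℝ)+1+a) + 1 by push_cast; ring,
          Real.Gamma_add_one (by positivity)]
      rw [hfact, hG]
      have h1 : (0:ℝ) < Real.Gamma ((n:ℝ)+1+a) := Real.Gamma_pos_of_pos (by positivity)
      have h2 : (0:ℝ) < (m.factorial : ℝ) := by positivity
      have h3 : (0:ℝ) < (n:ℝ)+1+a := by positivity
      have h4 : (0:ℝ) < Real.Gamma ((m:ℝ)+a) := hGpos m
      push_cast
      field_simp
    · have : m = n + 1 := by omega
      subst this
      rw [Finset.Ioc_self, Finset.prod_empty, mul_one]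
      exact base (n+1)

theorem cprime_estimate (σ s : ℝ) (hσ : -1/2 < σ) (hs : 0 < s) :
    ∃ ω > (0 : ℝ), ∃ C > (0 : ℝ), ∀ m n : ℕ, m ≤ n →
      |(-1 : ℝ) ^ (n - m) * s ^ ((1 : ℝ)/2) *
          Real.sqrt ((n.factorial : ℝ) * Real.Gamma ((m : ℝ) + 1/2 + σ) /
            ((m.factorial : ℝ) * Real.Gamma ((n : ℝ) + 3/2 + σ)))|
        ≤ C * s ^ ((1 : ℝ)/2) * ((m : ℝ) + 1) ^ (-ω) * ((n : ℝ) + 1) ^ (-ω) := by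
  set a : ℝ := 1/2 + σ with ha_def
  have ha : 0 < a := by rw [ha_def]; linarith
  set b : ℝ := min a 1 with hb_def
  have hb : 0 < b := lt_min ha one_pos
  have hb1 : b ≤ 1 := min_le_right a 1
  have hba : b ≤ a := min_le_left a 1
  clear_value b
  clear_value a
  have hC : (0:ℝ) < Real.sqrt (1 + 1/a) := Real.sqrt_pos.mpr (by positivity)
  refine ⟨b/4, by positivity, Real.sqrt (1 + 1/a), hC, ?_⟩
  intro m n hmn
  have hspos : (0:ℝ) < s ^ ((1:ℝ)/2) := Real.rpow_pos_of_pos hs _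
  have e1 : (m:ℝ) + 1/2 + σ = (m:ℝ) + a := by rw [ha_def]; ring
  have e2 : (n:ℝ) + 3/2 + σ = (n:ℝ) + 1 + a := by rw [ha_def]; ring
  rw [e1, e2, abs_mul, abs_mul, abs_pow, abs_neg, abs_one, one_pow, one_mul,
    abs_of_pos hspos, abs_of_nonneg (Real.sqrt_nonneg _)]
  -- bound on X
  have hm1 : (0:ℝ) < (m:ℝ) + 1 := by positivity
  have hn1 : (0:ℝ) < (n:ℝ) + 1 := by positivity
  have hmn' : (m:ℝ) + 1 ≤ (n:ℝ) + 1 := by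
    have : (m:ℝ) ≤ (n:ℝ) := Nat.cast_le.mpr hmn
    linarith
  have hXle : (n.factorial : ℝ) * Real.Gamma ((m:ℝ) + a) /
      ((m.factorial : ℝ) * Real.Gamma ((n:ℝ) + 1 + a))
      ≤ (1 + 1/a) * ((n:ℝ)+1) ^ (-b) := by
    rw [gamma_formula ha m n hmn]
    have hP := prod_bound ha hb hba m n hmn
    calc (1/((m:ℝ)+a)) * ∏ k ∈ Finset.Ioc m n, ((k:ℝ)/(k+a))
        ≤ (1/((m:ℝ)+a)) * (((m:ℝ)+1+b)/((n:ℝ)+1+b)) ^ b :=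
          mul_le_mul_of_nonneg_left hP (by positivity)
      _ = (1/((m:ℝ)+a)) * ((m:ℝ)+1+b) ^ b * ((n:ℝ)+1+b) ^ (-b) := by
          rw [Real.div_rpow (by positivity) (by positivity),
            Real.rpow_neg (by positivity)]
          ring
      _ ≤ (1 + 1/a) * ((n:ℝ)+1) ^ (-b) := by
          apply mul_le_mul
          · -- (1/(m+a)) * (m+1+b)^b ≤ 1 + 1/a
            have h1 : ((m:ℝ)+1+b) ^ b ≤ ((m:ℝ)+1+b) := by
              nth_rewrite 2 [← Real.rpow_one ((m:ℝ)+1+b)]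
              have h0 : (0:ℝ) ≤ (m:ℝ) := Nat.cast_nonneg m
              exact Real.rpow_le_rpow_of_exponent_le (by linarith) hb1
            have h2 : (1/((m:ℝ)+a)) * ((m:ℝ)+1+b) ≤ 1 + 1/a := by
              rw [one_div, inv_mul_le_iff₀ (by positivity)]
              have hexp : ((m:ℝ)+a) * (1 + 1/a) = (m:ℝ) + a + (m:ℝ)/a + 1 := by
                field_simp; ring
              rw [hexp]
              have hma : (0:ℝ) ≤ (m:ℝ)/a := by positivity
              linarith
            calc (1/((m:ℝ)+a)) * ((m:ℝ)+1+b) ^ b ≤ (1/((m:ℝ)+a)) * ((m:ℝ)+1+b) :=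
                  mul_le_mul_of_nonneg_left h1 (by positivity)
              _ ≤ 1 + 1/a := h2
          · exact Real.rpow_le_rpow_of_nonpos hn1 (by linarith) (by linarith)
          · positivity
          · positivity
  -- sqrt bound
  have hsq : Real.sqrt ((n.factorial : ℝ) * Real.Gamma ((m:ℝ) + a) /
      ((m.factorial : ℝ) * Real.Gamma ((n:ℝ) + 1 + a)))
      ≤ Real.sqrt (1 + 1/a) * ((m:ℝ)+1) ^ (-(b/4)) * ((n:ℝ)+1) ^ (-(b/4)) := by
    calc Real.sqrt _ ≤ Real.sqrt ((1 + 1/a) * ((n:ℝ)+1) ^ (-b)) := Real.sqrt_le_sqrt hXle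
      _ = Real.sqrt (1 + 1/a) * Real.sqrt (((n:ℝ)+1) ^ (-b)) :=
          Real.sqrt_mul (by positivity) _
      _ = Real.sqrt (1 + 1/a) * ((n:ℝ)+1) ^ (-(b/2)) := by
          have hss : Real.sqrt (((n:ℝ)+1) ^ (-b)) = ((n:ℝ)+1) ^ (-(b/2)) := by
            rw [show -(b/2) = -b * (1/2) by ring, Real.rpow_mul hn1.le, ← Real.sqrt_eq_rpow]
          rw [hss]
      _ = Real.sqrt (1 + 1/a) * (((n:ℝ)+1) ^ (-(b/4)) * ((n:ℝ)+1) ^ (-(b/4))) := by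
          rw [← Real.rpow_add hn1]
          congr 1
          ring
      _ ≤ Real.sqrt (1 + 1/a) * (((m:ℝ)+1) ^ (-(b/4)) * ((n:ℝ)+1) ^ (-(b/4))) := by
          apply mul_le_mul_of_nonneg_left _ hC.le
          apply mul_le_mul_of_nonneg_right _ (by positivity)
          exact Real.rpow_le_rpow_of_nonpos hm1 hmn' (by linarith)
      _ = Real.sqrt (1 + 1/a) * ((m:ℝ)+1) ^ (-(b/4)) * ((n:ℝ)+1) ^ (-(b/4)) := by ring
  calc s ^ ((1:ℝ)/2) * Real.sqrt _
      ≤ s ^ ((1:ℝ)/2) * (Real.sqrt (1 + 1/a) * ((m:ℝ)+1) ^ (-(b/4)) * ((n:ℝ)+1) ^ (-(b/4))) :=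
        mul_le_mul_of_nonneg_left hsq hspos.le
    _ = Real.sqrt (1 + 1/a) * s ^ ((1:ℝ)/2) * ((m:ℝ)+1) ^ (-(b/4)) * ((n:ℝ)+1) ^ (-(b/4)) := by
        ring
end
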